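/- arXiv:1804.03752 — 7 statements merged into one kernel-verified Lean document; each statement's English description precedes it below -/
import Mathlib

section
/- If G is a triangle-free graph with spectral radius μ and smallest eigenvalue μₙ, then s⁻ ≥ μ³/|μₙ| ≥ μ², where s⁻ is the sum of squares of the negative eigenvalues of the adjacency matrix. -/
open Finset

open Matrix

lemma aux_trace_pow {n : Type*} [Fintype n] [DecidableEq n] {A : Matrix n n ℝ}
    (hA : A.IsHermitian) (k : ℕ) : (A ^ k).trace = ∑ i, hA.eigenvalues i ^ k := by
  set U : Matrix n n ℝ := (hA.eigenvectorUnitary : Matrix n n ℝ) with hUdef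
  have h1 : U * star U = 1 := Matrix.mem_unitaryGroup_iff.mp hA.eigenvectorUnitary.2
  have h2 : star U * U = 1 := Matrix.mem_unitaryGroup_iff'.mp hA.eigenvectorUnitary.2
  have hcanc : ∀ X : Matrix n n ℝ, star U * (U * X) = X := fun X => by
    rw [← Matrix.mul_assoc, h2, Matrix.one_mul]
  set D : Matrix n n ℝ := Matrix.diagonal (RCLike.ofReal ∘ hA.eigenvalues) with hD
  have key : A ^ k = U * D ^ k * star U := by
    induction k with
    | zero => simp [h1]
    | succ m ih =>
        rw [pow_succ, ih]
        conv_lhs => rw [hA.spectral_theorem, Unitary.conjStarAlgAut_apply, ← hUdef, ← hD]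
        simp only [Matrix.mul_assoc, hcanc]
        rw [pow_succ]
        simp only [Matrix.mul_assoc]
  rw [key, Matrix.trace_mul_cycle, h2, Matrix.one_mul, hD,
    Matrix.diagonal_pow, Matrix.trace_diagonal]
  simp

lemma aux_rayleigh {n : Type*} [Fintype n] [DecidableEq n] {A : Matrix n n ℝ}
    (hA : A.IsHermitian) (μ : ℝ) (hub : ∀ i, hA.eigenvalues i ≤ μ) (x : n → ℝ) :
    x ⬝ᵥ (A *ᵥ x) ≤ μ * (x ⬝ᵥ x) := by
  set U : Matrix n n ℝ := (hA.eigenvectorUnitary : Matrix n n ℝ) with hUdef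
  have h1 : U * star U = 1 := Matrix.mem_unitaryGroup_iff.mp hA.eigenvectorUnitary.2
  have hstar : star U = Uᵀ := by
    rw [Matrix.star_eq_conjTranspose]; ext i j; simp [Matrix.conjTranspose_apply]
  set y : n → ℝ := star U *ᵥ x with hy
  have hxU : x ᵥ* U = y := by rw [hy, hstar, Matrix.mulVec_transpose]
  have hmain : x ⬝ᵥ (A *ᵥ x) = y ⬝ᵥ ((Matrix.diagonal hA.eigenvalues) *ᵥ y) := by
    conv_lhs => rw [hA.spectral_theorem, Unitary.conjStarAlgAut_apply]
    rw [← Matrix.mulVec_mulVec, ← Matrix.mulVec_mulVec, Matrix.dotProduct_mulVec, hxU, ← hUdef, ← hy]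
    norm_num [Function.comp]
  have hnorm : y ⬝ᵥ y = x ⬝ᵥ x := by
    conv_lhs => rw [hy, hstar, Matrix.mulVec_transpose, ← Matrix.dotProduct_mulVec]
    rw [hxU, hy, Matrix.mulVec_mulVec, h1, Matrix.one_mulVec]
  rw [hmain, ← hnorm]
  unfold dotProduct
  rw [Finset.mul_sum]
  apply Finset.sum_le_sum
  intro i _
  rw [Matrix.mulVec_diagonal]
  have : y i * (hA.eigenvalues i * y i) = hA.eigenvalues i * (y i * y i) := by ring
  rw [this]
  exact mul_le_mul_of_nonneg_right (hub i) (mul_self_nonneg _)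

theorem triangle_free_s_neg_ge_mu_sq
    {V : Type*} [Fintype V] [DecidableEq V] (G : SimpleGraph V)
    [DecidableRel G.Adj]
    (hA : (G.adjMatrix ℝ).IsHermitian)
    (htf : G.CliqueFree 3)
    (hedge : G.edgeFinset.Nonempty)
    (μ μn : ℝ)
    (hub : ∀ i, hA.eigenvalues i ≤ μ) (hμmem : ∃ i, hA.eigenvalues i = μ)
    (hlb : ∀ i, μn ≤ hA.eigenvalues i) (hμnmem : ∃ i, hA.eigenvalues i = μn) :
    μ ^ 3 / |μn| ≤
      (∑ i ∈ univ.filter (fun i => hA.eigenvalues i < 0), (hA.eigenvalues i) ^ 2) ∧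
    μ ^ 2 ≤ μ ^ 3 / |μn| := by
  set A : Matrix V V ℝ := G.adjMatrix ℝ with hAdef
  set f : V → ℝ := hA.eigenvalues with hf
  have hAnn : ∀ i j, 0 ≤ A i j := fun i j => by
    by_cases h : G.Adj i j <;> simp [hAdef, h]
  -- trace facts
  have t1 : ∑ i, f i = 0 := by
    have h := aux_trace_pow hA 1
    simp only [pow_one] at h
    rw [SimpleGraph.trace_adjMatrix] at h
    exact h.symm
  have t2 : ∑ i, f i ^ 2 = (A ^ 2).trace := (aux_trace_pow hA 2).symm
  have t3 : ∑ i, f i ^ 3 = 0 := by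
    rw [← aux_trace_pow hA 3]
    have h3 : ∀ i, (A ^ 3) i i = 0 := by
      intro i
      rw [pow_succ, pow_succ, pow_one, Matrix.mul_apply]
      apply Finset.sum_eq_zero; intro j _
      rw [Matrix.mul_apply, Finset.sum_mul]
      apply Finset.sum_eq_zero; intro k _
      by_cases h1 : G.Adj i k
      · by_cases h2 : G.Adj k j
        · have hnadj : ¬ G.Adj j i := fun hh =>
            htf {i, k, j} (SimpleGraph.is3Clique_triple_iff.mpr ⟨h1, hh.symm, h2⟩)
          simp [hAdef, hnadj]
        · simp [hAdef, h2]
      · simp [hAdef, h1]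
    simp [Matrix.trace, Matrix.diag, h3]
  -- positivity of trace of A^2
  have t2pos : 0 < ∑ i, f i ^ 2 := by
    obtain ⟨e, he⟩ := hedge
    induction e using Sym2.ind with
    | _ a b =>
      have hab : G.Adj a b := by rwa [SimpleGraph.mem_edgeFinset, SimpleGraph.mem_edgeSet] at he
      rw [t2]
      have hdiag : ∀ i, 0 ≤ (A ^ 2) i i := by
        intro i
        rw [pow_two, Matrix.mul_apply]
        exact Finset.sum_nonneg fun j _ => mul_nonneg (hAnn i j) (hAnn j i)
      have haa : 0 < (A ^ 2) a a := by
        rw [pow_two, Matrix.mul_apply]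
        have hterm : (0:ℝ) < A a b * A b a := by simp [hAdef, hab, hab.symm]
        exact lt_of_lt_of_le hterm
          (Finset.single_le_sum (fun j _ => mul_nonneg (hAnn a j) (hAnn j a)) (Finset.mem_univ b))
      have : Matrix.trace (A ^ 2) = ∑ i, (A ^ 2) i i := by simp [Matrix.trace, Matrix.diag]
      rw [this]
      exact lt_of_lt_of_le haa
        (Finset.single_le_sum (fun j _ => hdiag j) (Finset.mem_univ a))
  -- μ > 0
  have hμpos : 0 < μ := by
    by_contra h
    push_neg at h
    have hall : ∀ i ∈ Finset.univ, f i ≤ 0 := fun i _ => le_trans (hub i) h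
    have hzero : ∀ i ∈ Finset.univ, f i = 0 :=
      (Finset.sum_eq_zero_iff_of_nonpos hall).mp t1
    have : ∑ i, f i ^ 2 = 0 := Finset.sum_eq_zero fun i hi => by rw [hzero i hi]; ring
    linarith
  -- μn < 0
  have hμnneg : μn < 0 := by
    by_contra h
    push_neg at h
    have hall : ∀ i ∈ Finset.univ, 0 ≤ f i := fun i _ => le_trans h (hlb i)
    have hzero : ∀ i ∈ Finset.univ, f i = 0 :=
      (Finset.sum_eq_zero_iff_of_nonneg hall).mp t1
    have : ∑ i, f i ^ 2 = 0 := Finset.sum_eq_zero fun i hi => by rw [hzero i hi]; ring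
    linarith
  -- Perron: -μn ≤ μ
  obtain ⟨iN, hiN⟩ := hμnmem
  set v : V → ℝ := ⇑(hA.eigenvectorBasis iN) with hv
  have hAv : A *ᵥ v = μn • v := by rw [← hiN]; exact hA.mulVec_eigenvectorBasis iN
  have hray_v : v ⬝ᵥ (A *ᵥ v) = μn * (v ⬝ᵥ v) := by
    rw [hAv]; simp [dotProduct, Finset.mul_sum]; ring_nf
    exact Finset.sum_congr rfl fun i _ => by ring
  have hvv : v ⬝ᵥ v = 1 := by
    have e1 := hA.eigenvalues_eq iN
    simp only [star_trivial, RCLike.re_to_real] at e1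
    rw [hray_v] at e1
    have e1' : f iN = μn * (v ⬝ᵥ v) := e1
    rw [hiN] at e1'
    have hμn0 : μn ≠ 0 := ne_of_lt hμnneg
    have := mul_left_cancel₀ hμn0 (show μn * (v ⬝ᵥ v) = μn * 1 by rw [mul_one]; exact e1'.symm)
    exact this
  set w : V → ℝ := fun i => |v i| with hw
  have hww : w ⬝ᵥ w = 1 := by
    rw [← hvv]
    simp only [dotProduct, hw]
    exact Finset.sum_congr rfl fun i _ => abs_mul_abs_self (v i)
  have expand : ∀ u : V → ℝ, u ⬝ᵥ (A *ᵥ u) = ∑ i, ∑ j, A i j * u i * u j := by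
    intro u
    simp only [dotProduct, Matrix.mulVec, Finset.mul_sum]
    exact Finset.sum_congr rfl fun i _ => Finset.sum_congr rfl fun j _ => by ring
  have hq : -μn ≤ w ⬝ᵥ (A *ᵥ w) := by
    have h1 : v ⬝ᵥ (A *ᵥ v) = μn := by rw [hray_v, hvv, mul_one]
    rw [expand w, ← h1, expand v, ← Finset.sum_neg_distrib]
    apply Finset.sum_le_sum
    intro i _
    rw [← Finset.sum_neg_distrib]
    apply Finset.sum_le_sum
    intro j _
    have : -(v i * v j) ≤ |v i| * |v j| := by
      rw [← abs_mul]; exact neg_le_abs _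
    calc -(A i j * v i * v j) = A i j * (-(v i * v j)) := by ring
      _ ≤ A i j * (|v i| * |v j|) := mul_le_mul_of_nonneg_left this (hAnn i j)
      _ = A i j * w i * w j := by rw [hw]; ring
  have hperron : -μn ≤ μ := by
    have hr := aux_rayleigh hA μ hub w
    rw [hww, mul_one] at hr
    linarith
  -- main inequality
  set s : ℝ := ∑ i ∈ univ.filter (fun i => f i < 0), f i ^ 2 with hs
  have hsplit := Finset.sum_filter_add_sum_filter_not Finset.univ
    (fun i => f i < 0) (fun i => f i ^ 3)
  have hneg_ge : μn * s ≤ ∑ i ∈ univ.filter (fun i => f i < 0), f i ^ 3 := by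
    rw [hs, Finset.mul_sum]
    apply Finset.sum_le_sum
    intro i _
    have : f i ^ 3 = f i * f i ^ 2 := by ring
    rw [this]
    exact mul_le_mul_of_nonneg_right (hlb i) (sq_nonneg _)
  have hpos_ge : μ ^ 3 ≤ ∑ i ∈ univ.filter (fun i => ¬ f i < 0), f i ^ 3 := by
    obtain ⟨i0, hi0⟩ := hμmem
    have hmem : i0 ∈ univ.filter (fun i => ¬ f i < 0) := by
      rw [Finset.mem_filter]
      refine ⟨Finset.mem_univ _, not_lt.mpr ?_⟩
      rw [hi0]; exact hμpos.le
    have := Finset.single_le_sum (f := fun i => f i ^ 3)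
      (fun i hi => by
        simp only [Finset.mem_filter, not_lt] at hi
        exact pow_nonneg hi.2 3) hmem
    have h0 : μ ^ 3 = f i0 ^ 3 := by rw [hi0]
    rw [h0]
    exact this
  have hkey : μ ^ 3 ≤ s * (-μn) := by
    have h0 : ∑ i ∈ univ.filter (fun i => f i < 0), f i ^ 3
        + ∑ i ∈ univ.filter (fun i => ¬ f i < 0), f i ^ 3 = 0 := by
      rw [hsplit]; exact t3
    nlinarith [hneg_ge, hpos_ge]
  have habs : |μn| = -μn := abs_of_neg hμnneg
  have hnegpos : 0 < -μn := by linarith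
  constructor
  · rw [habs, div_le_iff₀ hnegpos]
    exact hkey
  · rw [habs, le_div_iff₀ hnegpos]
    nlinarith [hperron, sq_nonneg μ, hμpos]
end

section
/- For a triangle-free graph G on n vertices with at least one edge, n/(n − √(s⁺)) ≤ ω(G), where ω(G) is the clique number and s⁺ is the sum of squares of the positive adjacency eigenvalues. -/
open Finset Matrix

section Aux

variable {V : Type*} [Fintype V] [DecidableEq V]

lemma my_conj_pow (U D A : Matrix V V ℝ) (hU1 : U * star U = 1) (hU2 : star U * U = 1)
    (hSpec : A = U * D * star U) (k : ℕ) : A ^ k = U * D ^ k * star U := by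
  induction k with
  | zero => simpa using hU1.symm
  | succ n ih =>
      rw [pow_succ, ih, hSpec, pow_succ]
      simp only [Matrix.mul_assoc]
      rw [← Matrix.mul_assoc (star U) U (D * star U), hU2, Matrix.one_mul]

lemma my_trace_pow (A : Matrix V V ℝ) (hA : A.IsHermitian) (k : ℕ) :
    (A ^ k).trace = ∑ i, hA.eigenvalues i ^ k := by
  set U : Matrix V V ℝ := (hA.eigenvectorUnitary : Matrix V V ℝ) with hU
  have hU1 : U * star U = 1 := Matrix.mem_unitaryGroup_iff.mp hA.eigenvectorUnitary.2
  have hU2 : star U * U = 1 := Matrix.mem_unitaryGroup_iff'.mp hA.eigenvectorUnitary.2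
  rw [my_conj_pow U (Matrix.diagonal (RCLike.ofReal ∘ hA.eigenvalues)) A hU1 hU2
    hA.spectral_theorem k, Matrix.trace_mul_cycle, hU2, Matrix.one_mul,
    Matrix.diagonal_pow, Matrix.trace_diagonal]
  simp [RCLike.ofReal_real_eq_id]

lemma my_rayleigh (A : Matrix V V ℝ) (hA : A.IsHermitian) (L : ℝ)
    (hL : ∀ i, hA.eigenvalues i ≤ L) (x : V → ℝ) :
    dotProduct x (A *ᵥ x) ≤ L * dotProduct x x := by
  set U : Matrix V V ℝ := (hA.eigenvectorUnitary : Matrix V V ℝ) with hU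
  have hU1 : U * star U = 1 := Matrix.mem_unitaryGroup_iff.mp hA.eigenvectorUnitary.2
  have hd : (Matrix.diagonal (fun i => L - hA.eigenvalues i)).PosSemidef :=
    Matrix.posSemidef_diagonal_iff.mpr fun i => sub_nonneg.mpr (hL i)
  have hpsd := hd.mul_mul_conjTranspose_same U
  have hEq : U * (Matrix.diagonal (fun i => L - hA.eigenvalues i)) * Uᴴ
      = L • (1 : Matrix V V ℝ) - A := by
    have hdiag : Matrix.diagonal (fun i => L - hA.eigenvalues i)
        = L • (1 : Matrix V V ℝ) - Matrix.diagonal (RCLike.ofReal ∘ hA.eigenvalues) := by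
      rw [Matrix.smul_one_eq_diagonal, ← Matrix.diagonal_sub]
      congr 1
    rw [hdiag, Matrix.mul_sub, Matrix.sub_mul, ← Matrix.star_eq_conjTranspose]
    have h1 : U * (L • (1 : Matrix V V ℝ)) * star U = L • (1 : Matrix V V ℝ) := by
      rw [Matrix.mul_smul, Matrix.mul_one, Matrix.smul_mul, hU1]
    have hs : A = U * diagonal (RCLike.ofReal ∘ hA.eigenvalues) * star U := hA.spectral_theorem
    rw [h1, ← hs]
  rw [hEq] at hpsd
  have h2 := hpsd.dotProduct_mulVec_nonneg x
  have hstar : star x = x := by funext i; simp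
  rw [hstar, Matrix.sub_mulVec, Matrix.smul_mulVec, Matrix.one_mulVec,
    dotProduct_sub, dotProduct_smul, smul_eq_mul] at h2
  linarith

end Aux

theorem triangle_free_clique_bound
    {V : Type*} [Fintype V] [DecidableEq V] (G : SimpleGraph V)
    [DecidableRel G.Adj]
    (hA : (G.adjMatrix ℝ).IsHermitian)
    (htf : G.CliqueFree 3)
    (hedge : G.edgeFinset.Nonempty) :
    (Fintype.card V : ℝ) /
        ((Fintype.card V : ℝ) -
          Real.sqrt (∑ i ∈ univ.filter (fun i => 0 < hA.eigenvalues i),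
            (hA.eigenvalues i) ^ 2)) ≤ (G.cliqueNum : ℝ) := by
  classical
  obtain ⟨e₀, he₀⟩ := hedge
  -- get an edge's endpoints
  obtain ⟨u, v, huv⟩ : ∃ u v, G.Adj u v := by
    induction e₀ with
    | h u v =>
        rw [SimpleGraph.mem_edgeFinset, SimpleGraph.mem_edgeSet] at he₀
        exact ⟨u, v, he₀⟩
  haveI : Nonempty V := ⟨u⟩
  set A : Matrix V V ℝ := G.adjMatrix ℝ with hAdef
  set e : V → ℝ := hA.eigenvalues with he
  set n : ℝ := (Fintype.card V : ℝ) with hn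
  have hn0 : (0 : ℝ) < n := by
    rw [hn]; exact_mod_cast Fintype.card_pos
  set S : ℝ := ∑ i, e i ^ 2 with hS
  -- S equals the sum of degrees
  have hS_deg : S = ∑ w, (G.degree w : ℝ) := by
    rw [hS, ← my_trace_pow A hA 2]
    rw [pow_two, Matrix.trace]
    congr 1
    funext w
    exact G.adjMatrix_mul_self_apply_self w
  have hS_pos : 0 < S := by
    rw [hS_deg]
    refine Finset.sum_pos' (fun w _ => by positivity) ⟨u, Finset.mem_univ u, ?_⟩
    have : 0 < G.degree u := by
      rw [G.degree_pos_iff_exists_adj u]; exact ⟨v, huv⟩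
    exact_mod_cast this
  -- the maximum eigenvalue
  obtain ⟨i0, -, hi0⟩ := Finset.exists_max_image Finset.univ e ⟨u, Finset.mem_univ u⟩
  set L : ℝ := e i0 with hL
  have hLmax : ∀ i, e i ≤ L := fun i => hi0 i (Finset.mem_univ i)
  -- Rayleigh with the all-ones vector gives S ≤ n * L
  have hRay : S ≤ n * L := by
    have h := my_rayleigh A hA L hLmax (fun _ => 1)
    have hx1 : dotProduct (fun (_ : V) => (1 : ℝ)) (fun _ => (1 : ℝ)) = n := by
      simp [dotProduct, hn]
    have hx2 : dotProduct (fun (_ : V) => (1 : ℝ)) (A *ᵥ (fun _ => (1 : ℝ))) = S := by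
      rw [hS_deg, dotProduct]
      refine Finset.sum_congr rfl fun w _ => ?_
      rw [one_mul]
      have h1 : (A *ᵥ fun _ => (1 : ℝ)) w = ∑ t, A w t := by
        simp [Matrix.mulVec, dotProduct]
      rw [h1, hAdef]
      simp [SimpleGraph.adjMatrix_apply, SimpleGraph.degree,
        SimpleGraph.neighborFinset_eq_filter, Finset.sum_boole]
    rw [hx1, hx2] at h
    linarith
  have hLpos : 0 < L := by
    by_contra h
    push_neg at h
    nlinarith
  -- trace of A³ is zero
  have htr3 : ∑ i, e i ^ 3 = 0 := by
    rw [← my_trace_pow A hA 3]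
    rw [pow_succ, pow_two, Matrix.trace]
    refine Finset.sum_eq_zero fun w _ => ?_
    rw [Matrix.diag_apply, Matrix.mul_apply]
    refine Finset.sum_eq_zero fun a _ => ?_
    rw [Matrix.mul_apply, Finset.sum_mul]
    refine Finset.sum_eq_zero fun b _ => ?_
    by_cases h1 : G.Adj w b
    · by_cases h2 : G.Adj b a
      · by_cases h3 : G.Adj a w
        · exact absurd (SimpleGraph.is3Clique_triple_iff.mpr ⟨h1, h3.symm, h2⟩)
            (htf {w, b, a})
        · simp [hAdef, SimpleGraph.adjMatrix_apply, h3]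
      · simp [hAdef, SimpleGraph.adjMatrix_apply, h2]
    · simp [hAdef, SimpleGraph.adjMatrix_apply, h1]
  -- split into positive part and the rest
  set P : Finset V := Finset.univ.filter (fun i => 0 < e i) with hP
  set sp : ℝ := ∑ i ∈ P, e i ^ 2 with hsp
  set sm : ℝ := ∑ i ∈ Finset.univ.filter (fun i => ¬ 0 < e i), e i ^ 2 with hsm
  have hsplit : sp + sm = S := by
    rw [hsp, hsm, hS, hP]
    exact Finset.sum_filter_add_sum_filter_not _ _ _
  have hsm_nonneg : 0 ≤ sm := Finset.sum_nonneg fun i _ => sq_nonneg _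
  have hsp_nonneg : 0 ≤ sp := Finset.sum_nonneg fun i _ => sq_nonneg _
  -- cube inequality: L³ ≤ sm^{3/2}
  have hcube : L ^ 3 ≤ Real.sqrt sm * sm := by
    have hi0P : i0 ∈ P := by
      rw [hP, Finset.mem_filter]; exact ⟨Finset.mem_univ _, hLpos⟩
    have h1 : L ^ 3 ≤ ∑ i ∈ P, e i ^ 3 := by
      refine Finset.single_le_sum (f := fun i => e i ^ 3) (fun i hi => ?_) hi0P
      rw [hP, Finset.mem_filter] at hi
      exact pow_nonneg (le_of_lt hi.2) 3
    have h2 : ∑ i ∈ P, e i ^ 3 = ∑ i ∈ Finset.univ.filter (fun i => ¬ 0 < e i), (-(e i)) ^ 3 := by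
      have := Finset.sum_filter_add_sum_filter_not Finset.univ (fun i => 0 < e i)
        (fun i => e i ^ 3)
      have hodd : ∀ i, (-(e i)) ^ 3 = -(e i ^ 3) := fun i => by ring
      rw [Finset.sum_congr rfl (fun i _ => hodd i), Finset.sum_neg_distrib]
      rw [hP]
      linarith [this.trans htr3]
    have h3 : ∑ i ∈ Finset.univ.filter (fun i => ¬ 0 < e i), (-(e i)) ^ 3
        ≤ Real.sqrt sm * sm := by
      have hterm : ∀ i ∈ Finset.univ.filter (fun i => ¬ 0 < e i),
          (-(e i)) ^ 3 ≤ Real.sqrt sm * (e i ^ 2) := by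
        intro i hi
        rw [Finset.mem_filter] at hi
        have hei : 0 ≤ -(e i) := by push_neg at hi; linarith [hi.2]
        have hsq : e i ^ 2 ≤ sm := by
          refine Finset.single_le_sum (f := fun j => e j ^ 2) (fun j _ => sq_nonneg _) ?_
          rw [Finset.mem_filter]
          exact ⟨Finset.mem_univ _, hi.2⟩
        have hle : -(e i) ≤ Real.sqrt sm := by
          rw [show e i ^ 2 = (-(e i)) ^ 2 by ring] at hsq
          calc -(e i) = Real.sqrt ((-(e i)) ^ 2) := (Real.sqrt_sq hei).symm
            _ ≤ Real.sqrt sm := Real.sqrt_le_sqrt hsq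
        calc (-(e i)) ^ 3 = (-(e i)) * (-(e i)) ^ 2 := by ring
          _ ≤ Real.sqrt sm * (-(e i)) ^ 2 := by
              exact mul_le_mul_of_nonneg_right hle (sq_nonneg _)
          _ = Real.sqrt sm * (e i ^ 2) := by ring
      calc ∑ i ∈ Finset.univ.filter (fun i => ¬ 0 < e i), (-(e i)) ^ 3
          ≤ ∑ i ∈ Finset.univ.filter (fun i => ¬ 0 < e i), Real.sqrt sm * (e i ^ 2) :=
            Finset.sum_le_sum hterm
        _ = Real.sqrt sm * sm := by rw [hsm, ← Finset.mul_sum]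
    linarith
  have hLsm : L ^ 2 ≤ sm := by
    have h1 : L ^ 3 ≤ Real.sqrt sm ^ 3 := by
      have : Real.sqrt sm ^ 3 = Real.sqrt sm * sm := by
        rw [pow_succ, Real.sq_sqrt hsm_nonneg, mul_comm]
      linarith
    have h2 : L ≤ Real.sqrt sm :=
      le_of_pow_le_pow_left₀ (by norm_num) (Real.sqrt_nonneg _) h1
    calc L ^ 2 ≤ Real.sqrt sm ^ 2 := by
          exact pow_le_pow_left₀ (le_of_lt hLpos) h2 2
      _ = sm := Real.sq_sqrt hsm_nonneg
  -- hence sp ≤ n²/4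
  have hsp_bound : sp ≤ n ^ 2 / 4 := by
    nlinarith [sq_nonneg (n / 2 - L), hsplit, hLsm, hRay]
  have hsqrt : Real.sqrt sp ≤ n / 2 := by
    calc Real.sqrt sp ≤ Real.sqrt ((n / 2) ^ 2) := by
          apply Real.sqrt_le_sqrt; nlinarith
      _ = n / 2 := Real.sqrt_sq (by linarith)
  -- clique number is at least 2
  have hclique : (2 : ℝ) ≤ (G.cliqueNum : ℝ) := by
    have h2 : ({u, v} : Finset V).card = 2 := by
      rw [Finset.card_insert_of_notMem (by simp [G.ne_of_adj huv]), Finset.card_singleton]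
    have hcl : G.IsClique ({u, v} : Finset V) := by
      rw [Finset.coe_insert, Finset.coe_singleton]
      exact SimpleGraph.isClique_pair.mpr fun _ => huv
    have := SimpleGraph.IsClique.card_le_cliqueNum (G := G) (t := ({u, v} : Finset V)) (tc := hcl)
    rw [h2] at this
    exact_mod_cast this
  -- final computation
  have hden : 0 < n - Real.sqrt sp := by
    have : 0 ≤ Real.sqrt sp := Real.sqrt_nonneg _
    linarith
  have hfinal : n / (n - Real.sqrt sp) ≤ 2 := by
    rw [div_le_iff₀ hden]
    linarith
  calc n / (n - Real.sqrt sp) ≤ 2 := hfinal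
    _ ≤ (G.cliqueNum : ℝ) := hclique
end

section
/- For a graph G with n vertices, m ≥ 1 edges, spectral radius μ, and s⁺ the sum of squares of positive adjacency eigenvalues: if 2m/(2m − s⁺) ≤ χ(G) and G satisfies ω(G) = χ(G), then n/(n − √(s⁺)) ≤ ω(G). -/
open Finset Matrix

theorem weakly_perfect_clique_bound
    {V : Type*} [Fintype V] [DecidableEq V] (G : SimpleGraph V)
    [DecidableRel G.Adj]
    (hA : (G.adjMatrix ℝ).IsHermitian)
    (hm : 1 ≤ G.edgeFinset.card)
    (χ : ℕ) (hchi : G.chromaticNumber = (χ : ℕ∞))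
    (hsplus_lt : (∑ i ∈ univ.filter (fun i => 0 < hA.eigenvalues i),
        (hA.eigenvalues i) ^ 2) < 2 * (G.edgeFinset.card : ℝ))
    (hsqrt_lt : Real.sqrt (∑ i ∈ univ.filter (fun i => 0 < hA.eigenvalues i),
        (hA.eigenvalues i) ^ 2) < (Fintype.card V : ℝ))
    (hAndoLin : 2 * (G.edgeFinset.card : ℝ) /
        (2 * (G.edgeFinset.card : ℝ) -
          ∑ i ∈ univ.filter (fun i => 0 < hA.eigenvalues i),
            (hA.eigenvalues i) ^ 2) ≤ (χ : ℝ))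
    (hperfect : G.cliqueNum = χ) :
    (Fintype.card V : ℝ) /
        ((Fintype.card V : ℝ) -
          Real.sqrt (∑ i ∈ univ.filter (fun i => 0 < hA.eigenvalues i),
            (hA.eigenvalues i) ^ 2)) ≤ (G.cliqueNum : ℝ) := by
  classical
  set lam : V → ℝ := hA.eigenvalues with hlam
  set s : ℝ := ∑ i ∈ univ.filter (fun i => 0 < lam i), (lam i) ^ 2 with hs
  set n : ℝ := (Fintype.card V : ℝ) with hn
  set m : ℝ := (G.edgeFinset.card : ℝ) with hmdef
  have hs_nonneg : 0 ≤ s := Finset.sum_nonneg fun i _ => sq_nonneg _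
  set t : ℝ := Real.sqrt s with ht
  have ht_nonneg : 0 ≤ t := Real.sqrt_nonneg _
  have ht_sq : t ^ 2 = s := Real.sq_sqrt hs_nonneg
  set U : Matrix V V ℝ := (hA.eigenvectorUnitary : Matrix V V ℝ) with hU
  set o : V → ℝ := fun _ => 1 with ho
  set c : V → ℝ := (star U) *ᵥ o with hc
  -- key identity: o ⬝ᵥ (U *ᵥ y) = ∑ i, c i * y i
  have key : ∀ y : V → ℝ, o ⬝ᵥ (U *ᵥ y) = ∑ i, c i * y i := by
    intro y
    simp only [dotProduct, Matrix.mulVec, dotProduct, ho, one_mul, hc,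
      Matrix.star_apply, star_trivial]
    rw [Finset.sum_comm]
    refine Finset.sum_congr rfl fun i _ => ?_
    rw [Finset.sum_mul]
    refine Finset.sum_congr rfl fun j _ => ?_
    simp [Matrix.conjTranspose_apply, mul_comm]
  -- c has squared norm n
  have hUc : U *ᵥ c = o := by
    rw [hc, Matrix.mulVec_mulVec,
      (Matrix.mem_unitaryGroup_iff).mp hA.eigenvectorUnitary.2, Matrix.one_mulVec]
  have hcnorm : ∑ i, (c i) ^ 2 = n := by
    have h2 := key c
    rw [hUc] at h2
    have h3 : o ⬝ᵥ o = n := by simp [dotProduct, ho, hn]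
    rw [h3] at h2
    rw [h2]
    exact Finset.sum_congr rfl fun i _ => (sq (c i)).symm ▸ by ring
  -- quadratic form identity
  have hquad : o ⬝ᵥ (G.adjMatrix ℝ *ᵥ o) = ∑ i, lam i * (c i) ^ 2 := by
    have hspec := hA.spectral_theorem
    have hdiag : (Matrix.diagonal (RCLike.ofReal ∘ hA.eigenvalues) : Matrix V V ℝ)
        = Matrix.diagonal lam := by
      congr 1
    calc o ⬝ᵥ (G.adjMatrix ℝ *ᵥ o)
        = o ⬝ᵥ ((U * Matrix.diagonal lam * star U) *ᵥ o) := by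
          rw [← hdiag, hU]; conv_lhs => rw [hspec]
          rfl
      _ = o ⬝ᵥ (U *ᵥ (Matrix.diagonal lam *ᵥ c)) := by
          rw [hc, Matrix.mulVec_mulVec, Matrix.mulVec_mulVec]
      _ = ∑ i, c i * (Matrix.diagonal lam *ᵥ c) i := key _
      _ = ∑ i, lam i * (c i) ^ 2 := by
          refine Finset.sum_congr rfl fun i _ => ?_
          rw [Matrix.mulVec_diagonal]; ring
  -- quadratic form equals 2m
  have h2m : o ⬝ᵥ (G.adjMatrix ℝ *ᵥ o) = 2 * m := by
    have : ∀ v, (G.adjMatrix ℝ *ᵥ o) v = (G.degree v : ℝ) := by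
      intro v
      have := SimpleGraph.adjMatrix_mulVec_const_apply (G := G) (α := ℝ) (a := (1:ℝ)) (v := v)
      simpa [Function.const, ho] using this
    calc o ⬝ᵥ (G.adjMatrix ℝ *ᵥ o) = ∑ v, (G.adjMatrix ℝ *ᵥ o) v := by
          simp [dotProduct, ho]
      _ = ∑ v, (G.degree v : ℝ) := Finset.sum_congr rfl fun v _ => this v
      _ = ((∑ v, G.degree v : ℕ) : ℝ) := by push_cast; ring
      _ = 2 * m := by rw [G.sum_degrees_eq_twice_card_edges]; push_cast [hmdef]; ring
  -- crucial bound: 2m ≤ n * t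
  have hbound : 2 * m ≤ n * t := by
    rw [← h2m, hquad]
    have hsplit := Finset.sum_filter_add_sum_filter_not univ
      (fun i => 0 < lam i) (fun i => lam i * (c i) ^ 2)
    have hneg : ∑ i ∈ univ.filter (fun i => ¬ 0 < lam i), lam i * (c i) ^ 2 ≤ 0 := by
      refine Finset.sum_nonpos fun i hi => ?_
      rw [Finset.mem_filter] at hi
      exact mul_nonpos_of_nonpos_of_nonneg (le_of_not_gt hi.2) (sq_nonneg _)
    have hpos : ∑ i ∈ univ.filter (fun i => 0 < lam i), lam i * (c i) ^ 2
        ≤ t * ∑ i, (c i) ^ 2 := by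
      calc ∑ i ∈ univ.filter (fun i => 0 < lam i), lam i * (c i) ^ 2
          ≤ ∑ i ∈ univ.filter (fun i => 0 < lam i), t * (c i) ^ 2 := by
            refine Finset.sum_le_sum fun i hi => ?_
            have hil : (lam i) ^ 2 ≤ s :=
              Finset.single_le_sum (fun j _ => sq_nonneg (lam j)) hi
            have : lam i ≤ t := by
              have h1 : lam i = Real.sqrt ((lam i) ^ 2) := by
                rw [Real.sqrt_sq (le_of_lt (Finset.mem_filter.mp hi).2)]
              rw [h1, ht]
              exact Real.sqrt_le_sqrt hil
            exact mul_le_mul_of_nonneg_right this (sq_nonneg _)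
        _ = t * ∑ i ∈ univ.filter (fun i => 0 < lam i), (c i) ^ 2 := by
            rw [Finset.mul_sum]
        _ ≤ t * ∑ i, (c i) ^ 2 := by
            refine mul_le_mul_of_nonneg_left ?_ ht_nonneg
            exact Finset.sum_le_sum_of_subset_of_nonneg (Finset.filter_subset _ _)
              (fun i _ _ => sq_nonneg _)
    calc ∑ i, lam i * (c i) ^ 2
        = (∑ i ∈ univ.filter (fun i => 0 < lam i), lam i * (c i) ^ 2)
          + ∑ i ∈ univ.filter (fun i => ¬ 0 < lam i), lam i * (c i) ^ 2 := hsplit.symm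
      _ ≤ t * ∑ i, (c i) ^ 2 + 0 := add_le_add hpos hneg
      _ = n * t := by rw [hcnorm]; ring
  -- finish
  have hm' : (1 : ℝ) ≤ m := by rw [hmdef]; exact_mod_cast hm
  have hden1 : 0 < 2 * m - s := by linarith
  have ht_pos : 0 < t := by nlinarith
  have hden2 : 0 < n - t := by rw [hn, ht, hs]; linarith [hsqrt_lt]
  have hchain : n / (n - t) ≤ 2 * m / (2 * m - s) := by
    rw [div_le_div_iff₀ hden2 hden1]
    nlinarith
  have hfinal : (G.cliqueNum : ℝ) = (χ : ℝ) := by exact_mod_cast congrArg Nat.cast hperfect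
  calc n / (n - t) ≤ 2 * m / (2 * m - s) := hchain
    _ ≤ (χ : ℝ) := hAndoLin
    _ = (G.cliqueNum : ℝ) := hfinal.symm
end

section
/- For the Kneser graph KG_{p,2} with p ≥ 4, n/(n − √(s⁺)) ≤ ω(KG_{p,2}), where n = C(p,2), s⁺ is the sum of squares of the positive adjacency eigenvalues, and ω is the clique number. -/
open Finset Matrix

def kneserGraph (p : ℕ) : SimpleGraph {s : Finset (Fin p) // s.card = 2} where
  Adj a b := Disjoint a.1 b.1
  symm := ⟨fun a b h => h.symm⟩
  loopless := ⟨by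
    rintro ⟨s, hs⟩ h
    simp only [disjoint_self] at h
    simp [h] at hs⟩

lemma count_disjoint (p : ℕ) (s t : Finset (Fin p)) :
    (univ.filter (fun u : {s : Finset (Fin p) // s.card = 2} =>
        Disjoint s u.1 ∧ Disjoint t u.1)).card = (p - (s ∪ t).card).choose 2 := by
  have hc : (s ∪ t)ᶜ.card = p - (s ∪ t).card := by
    rw [Finset.card_compl, Fintype.card_fin]
  rw [← hc, ← Finset.card_powersetCard 2 (s ∪ t)ᶜ]
  apply Finset.card_bij (fun u _ => u.1)
  · rintro ⟨u, hu⟩ hmem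
    simp only [mem_filter, mem_univ, true_and] at hmem
    rw [Finset.mem_powersetCard]
    refine ⟨?_, hu⟩
    intro x hx
    simp only [Finset.mem_compl, Finset.mem_union]
    rintro (hxs | hxt)
    · exact (Finset.disjoint_left.mp hmem.1) hxs hx
    · exact (Finset.disjoint_left.mp hmem.2) hxt hx
  · rintro ⟨u, hu⟩ _ ⟨v, hv⟩ _ h
    exact Subtype.ext h
  · intro w hw
    rw [Finset.mem_powersetCard] at hw
    refine ⟨⟨w, hw.2⟩, ?_, rfl⟩
    simp only [mem_filter, mem_univ, true_and]
    constructor <;> rw [Finset.disjoint_right] <;> intro x hx <;>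
      have := hw.1 hx <;> simp only [Finset.mem_compl, Finset.mem_union] at this <;> tauto

variable (p : ℕ) [DecidableRel (kneserGraph p).Adj]



lemma mul_self_apply (s t : {s : Finset (Fin p) // s.card = 2}) :
    ((kneserGraph p).adjMatrix ℝ * (kneserGraph p).adjMatrix ℝ) s t = ((p - (s.1 ∪ t.1).card).choose 2 : ℕ) := by
  rw [Matrix.mul_apply, ← count_disjoint p s.1 t.1, Finset.card_filter]
  push_cast
  apply Finset.sum_congr rfl
  intro u _
  by_cases h1 : Disjoint s.1 u.1 <;> by_cases h2 : Disjoint t.1 u.1 <;>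
    (simp only [SimpleGraph.adjMatrix_apply]; simp [kneserGraph, h1, h2, disjoint_comm])

lemma row_sum (s : {s : Finset (Fin p) // s.card = 2}) :
    ∑ u, (kneserGraph p).adjMatrix ℝ s u = ((p - 2).choose 2 : ℕ) := by
  have h := count_disjoint p s.1 s.1
  rw [Finset.union_self, s.2] at h
  rw [← h, Finset.card_filter]
  push_cast
  apply Finset.sum_congr rfl
  intro u _
  by_cases h1 : Disjoint s.1 u.1 <;>
    (simp only [SimpleGraph.adjMatrix_apply]; simp [kneserGraph, h1, disjoint_comm])

lemma union_card_three (s t : {s : Finset (Fin p) // s.card = 2}) (hst : s ≠ t)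
    (hd : ¬ Disjoint s.1 t.1) : (s.1 ∪ t.1).card = 3 := by
  have h := Finset.card_union_add_card_inter s.1 t.1
  rw [s.2, t.2] at h
  have h1 : 1 ≤ (s.1 ∩ t.1).card := by
    obtain ⟨x, hx⟩ := Finset.not_disjoint_iff_nonempty_inter.mp hd
    exact Finset.card_pos.mpr ⟨x, hx⟩
  have h2 : (s.1 ∩ t.1).card ≠ 2 := by
    intro h2
    apply hst
    have hs : s.1 ∩ t.1 = s.1 :=
      Finset.eq_of_subset_of_card_le Finset.inter_subset_left (by rw [h2, s.2])
    have ht : s.1 ∩ t.1 = t.1 :=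
      Finset.eq_of_subset_of_card_le Finset.inter_subset_right (le_of_eq (t.2.trans h2.symm))
    exact Subtype.ext (hs.symm.trans ht)
  have h3 : (s.1 ∩ t.1).card ≤ 2 := by
    have h4 := Finset.card_le_card (Finset.inter_subset_left : s.1 ∩ t.1 ⊆ s.1)
    rw [s.2] at h4
    exact h4
  omega

lemma key_identity :
    (kneserGraph p).adjMatrix ℝ * (kneserGraph p).adjMatrix ℝ
      + ((p-3).choose 2 : ℝ) • (kneserGraph p).adjMatrix ℝ
      + ((p-3).choose 2 : ℝ) • (1 : Matrix _ _ ℝ)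
    = ((p-4).choose 2 : ℝ) • (kneserGraph p).adjMatrix ℝ
      + ((p-2).choose 2 : ℝ) • (1 : Matrix _ _ ℝ)
      + ((p-3).choose 2 : ℝ) • (Matrix.of fun _ _ => (1:ℝ)) := by
  ext s t
  simp only [Matrix.add_apply, Matrix.smul_apply, Matrix.of_apply, smul_eq_mul, mul_one]
  rw [mul_self_apply]
  by_cases hst : s = t
  · subst hst
    rw [Finset.union_self, s.2]
    simp [Matrix.one_apply_eq]
  · by_cases hd : Disjoint s.1 t.1
    · have hc : (s.1 ∪ t.1).card = 4 := by
        rw [Finset.card_union_of_disjoint hd, s.2, t.2]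
      rw [hc]
      have hadj : (kneserGraph p).Adj s t := hd
      simp [Matrix.one_apply_ne hst, hadj]
    · have hc := union_card_three p s t hst hd
      rw [hc]
      have hadj : ¬ (kneserGraph p).Adj s t := hd
      simp [Matrix.one_apply_ne hst, hadj]

lemma A_mulVec_const (c : ℝ) :
    (kneserGraph p).adjMatrix ℝ *ᵥ (fun _ => c) = fun _ => ((p-2).choose 2 : ℝ) * c := by
  ext s
  simp only [Matrix.mulVec, dotProduct]
  rw [← Finset.sum_mul, row_sum]

lemma eigen_cubic (hA : ((kneserGraph p).adjMatrix ℝ).IsHermitian) (i) :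
    (hA.eigenvalues i - ((p-2).choose 2 : ℝ)) *
      (hA.eigenvalues i ^ 2 + ((p-3).choose 2 : ℝ) * hA.eigenvalues i + ((p-3).choose 2 : ℝ)
        - ((p-4).choose 2 : ℝ) * hA.eigenvalues i - ((p-2).choose 2 : ℝ)) = 0 := by
  set μ := hA.eigenvalues i with hμ
  set v : _ → ℝ := ⇑(hA.eigenvectorBasis i) with hv
  have hev : (kneserGraph p).adjMatrix ℝ *ᵥ v = μ • v := hA.mulVec_eigenvectorBasis i
  have hvne : v ≠ 0 := by
    intro h
    exact hA.eigenvectorBasis.orthonormal.ne_zero i (by ext j; exact congrFun h j)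
  obtain ⟨j, hj⟩ : ∃ j, v j ≠ 0 := by
    by_contra hc
    push_neg at hc
    exact hvne (funext hc)
  set c : ℝ := ∑ u, v u with hc
  have hJ : (Matrix.of fun _ _ => (1:ℝ) :
      Matrix {s : Finset (Fin p) // s.card = 2} {s : Finset (Fin p) // s.card = 2} ℝ) *ᵥ v
      = fun _ => c := by
    ext s
    simp [Matrix.mulVec, dotProduct, hc]
  have h2 := congrArg (fun M => M *ᵥ v) (key_identity p)
  simp only [Matrix.add_mulVec, Matrix.smul_mulVec, Matrix.one_mulVec, hJ] at h2
  rw [← Matrix.mulVec_mulVec, hev, Matrix.mulVec_smul, hev] at h2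
  have h3 := congrArg (fun x => (kneserGraph p).adjMatrix ℝ *ᵥ x) h2
  simp only [Matrix.mulVec_add, Matrix.mulVec_smul, hev, A_mulVec_const] at h3
  have e2 := congrFun h2 j
  have e3 := congrFun h3 j
  simp only [Pi.add_apply, Pi.smul_apply, smul_eq_mul] at e2 e3
  have key : (μ - ((p-2).choose 2 : ℝ)) *
      (μ ^ 2 + ((p-3).choose 2 : ℝ) * μ + ((p-3).choose 2 : ℝ)
        - ((p-4).choose 2 : ℝ) * μ - ((p-2).choose 2 : ℝ)) * v j = 0 := by
    linear_combination e3 - ((p-2).choose 2 : ℝ) * e2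
  rcases mul_eq_zero.mp key with h | h
  · exact h
  · exact absurd h hj

section TraceLemmas
variable {n : Type*} [Fintype n] [DecidableEq n] {M : Matrix n n ℝ}

lemma herm_sum_eigenvalues (hM : M.IsHermitian) :
    ∑ i, hM.eigenvalues i = M.trace := by
  have key : (star (hM.eigenvectorUnitary : Matrix n n ℝ)) * hM.eigenvectorUnitary = 1 :=
    (Unitary.mem_iff.mp hM.eigenvectorUnitary.2).1
  conv_rhs => rw [hM.spectral_theorem, Unitary.conjStarAlgAut_apply]
  rw [Matrix.trace_mul_cycle, key, Matrix.one_mul, Matrix.trace_diagonal]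
  simp [RCLike.ofReal_real_eq_id]

lemma herm_sum_eigenvalues_sq (hM : M.IsHermitian) :
    ∑ i, (hM.eigenvalues i)^2 = (M * M).trace := by
  have key : (star (hM.eigenvectorUnitary : Matrix n n ℝ)) * hM.eigenvectorUnitary = 1 :=
    (Unitary.mem_iff.mp hM.eigenvectorUnitary.2).1
  have hsq : M * M = (hM.eigenvectorUnitary : Matrix n n ℝ) *
      (Matrix.diagonal (RCLike.ofReal ∘ hM.eigenvalues) *
        Matrix.diagonal (RCLike.ofReal ∘ hM.eigenvalues)) *
      star (hM.eigenvectorUnitary : Matrix n n ℝ) := by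
    conv_lhs => rw [hM.spectral_theorem, Unitary.conjStarAlgAut_apply]
    simp only [← Matrix.mul_assoc]
    rw [Matrix.mul_assoc ((hM.eigenvectorUnitary : Matrix n n ℝ) *
        Matrix.diagonal (RCLike.ofReal ∘ hM.eigenvalues)) (star _) _, key, Matrix.mul_one,
      Matrix.mul_assoc (hM.eigenvectorUnitary : Matrix n n ℝ)]
  rw [hsq, Matrix.trace_mul_cycle, key, Matrix.one_mul,
    Matrix.diagonal_mul_diagonal, Matrix.trace_diagonal]
  simp [RCLike.ofReal_real_eq_id, pow_two]

end TraceLemmas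

lemma clique_bound (hp : 4 ≤ p) : p / 2 ≤ (kneserGraph p).cliqueNum := by
  have hb : ∀ i : Fin (p / 2), 2 * i.1 + 1 < p := by
    intro i
    have := i.2
    omega
  let f : Fin (p / 2) → {s : Finset (Fin p) // s.card = 2} := fun i =>
    ⟨{⟨2 * i.1, lt_trans (Nat.lt_succ_self _) (hb i)⟩, ⟨2 * i.1 + 1, hb i⟩}, by
      rw [Finset.card_insert_of_notMem (by simp [Fin.ext_iff]), Finset.card_singleton]⟩
  have hmemf : ∀ (i : Fin (p/2)) (x : Fin p), x ∈ (f i).1 ↔ x.1 = 2*i.1 ∨ x.1 = 2*i.1+1 := by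
    intro i x
    simp [f, Fin.ext_iff]
  have hinj : Function.Injective f := by
    intro i j hij
    have h1 : (⟨2 * i.1, lt_trans (Nat.lt_succ_self _) (hb i)⟩ : Fin p) ∈ (f j).1 := by
      rw [← hij]; exact Finset.mem_insert_self _ _
    rw [hmemf] at h1
    have : i.1 = j.1 := by simp at h1; omega
    exact Fin.ext this
  have hclique : (kneserGraph p).IsClique ↑(Finset.univ.image f) := by
    intro x hx y hy hne
    simp only [Finset.coe_image, Set.mem_image, Finset.mem_coe, Finset.coe_univ, Set.image_univ,
      Set.mem_range] at hx hy
    obtain ⟨i, rfl⟩ := hx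
    obtain ⟨j, rfl⟩ := hy
    have hij : i ≠ j := fun h => hne (by rw [h])
    show Disjoint (f i).1 (f j).1
    rw [Finset.disjoint_left]
    intro a ha hb'
    rw [hmemf] at ha hb'
    have : i.1 ≠ j.1 := fun h => hij (Fin.ext h)
    omega
  have hcard : (Finset.univ.image f).card = p / 2 := by
    rw [Finset.card_image_of_injective _ hinj, Finset.card_univ, Fintype.card_fin]
  calc p / 2 = (Finset.univ.image f).card := hcard.symm
    _ ≤ (kneserGraph p).cliqueNum :=
      SimpleGraph.IsClique.card_le_cliqueNum (tc := hclique)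

lemma cast_lemmas (hp : 4 ≤ p) :
    ((p-2).choose 2 : ℝ) = ((p:ℝ)-2)*((p:ℝ)-3)/2 ∧
    ((p-3).choose 2 : ℝ) = ((p:ℝ)-3)*((p:ℝ)-4)/2 ∧
    ((p-4).choose 2 : ℝ) = ((p:ℝ)-4)*((p:ℝ)-5)/2 ∧
    ((p.choose 2 : ℕ) : ℝ) = (p:ℝ)*((p:ℝ)-1)/2 := by
  refine ⟨?_, ?_, ?_, ?_⟩
  · rw [Nat.cast_choose_two, Nat.cast_sub (by omega)]
    push_cast; ring
  · rw [Nat.cast_choose_two, Nat.cast_sub (by omega)]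
    push_cast; ring
  · rcases Nat.lt_or_ge p 5 with h | h
    · have hp4 : p = 4 := by omega
      subst hp4; norm_num
    · rw [Nat.cast_choose_two, Nat.cast_sub (by omega)]
      push_cast; ring
  · rw [Nat.cast_choose_two]

lemma sum_eig (hA : ((kneserGraph p).adjMatrix ℝ).IsHermitian) :
    ∑ i, hA.eigenvalues i = 0 := by
  rw [herm_sum_eigenvalues hA, SimpleGraph.trace_adjMatrix]

lemma sum_eig_sq (hA : ((kneserGraph p).adjMatrix ℝ).IsHermitian) :
    ∑ i, (hA.eigenvalues i)^2 = (p.choose 2 : ℝ) * ((p-2).choose 2 : ℝ) := by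
  rw [herm_sum_eigenvalues_sq hA, Matrix.trace]
  have : ∀ s : {s : Finset (Fin p) // s.card = 2},
      ((kneserGraph p).adjMatrix ℝ * (kneserGraph p).adjMatrix ℝ).diag s
        = ((p-2).choose 2 : ℝ) := by
    intro s
    rw [Matrix.diag_apply, mul_self_apply, Finset.union_self, s.2]
  rw [Finset.sum_congr rfl (fun s _ => this s), Finset.sum_const, Finset.card_univ,
    Fintype.card_finset_len, Fintype.card_fin, nsmul_eq_mul]

lemma sPlus_val (hp : 4 ≤ p) (hA : ((kneserGraph p).adjMatrix ℝ).IsHermitian) :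
    ∑ i ∈ univ.filter (fun i => 0 < hA.eigenvalues i), (hA.eigenvalues i) ^ 2
      = ((p:ℝ)-1)*((p:ℝ)-3)*((p:ℝ)^2-6*(p:ℝ)+12)/4 := by
  obtain ⟨hd, hbb, ha, hN⟩ := cast_lemmas p hp
  set x : ℝ := (p : ℝ) with hxdef
  have hx : (4:ℝ) ≤ x := by rw [hxdef]; exact_mod_cast hp
  have hx0 : x ≠ 0 := by linarith
  have hx2 : x - 2 ≠ 0 := by linarith
  set D : ℝ := (x-2)*(x-3)/2 with hD
  set C : ℝ := 2*(x-3)/(x*(x-2)) with hC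
  have hDpos : 0 < D := by rw [hD]; nlinarith
  have hroots : ∀ i, hA.eigenvalues i = D ∨ hA.eigenvalues i = 1 ∨
      hA.eigenvalues i = -(x-3) := by
    intro i
    have hcub := eigen_cubic p hA i
    rw [hd, hbb, ha] at hcub
    have hfac : (hA.eigenvalues i - D) * ((hA.eigenvalues i - 1) *
        (hA.eigenvalues i + (x-3))) = 0 := by linear_combination hcub
    rcases mul_eq_zero.mp hfac with h | h
    · exact Or.inl (by linarith [sub_eq_zero.mp h])
    · rcases mul_eq_zero.mp h with h' | h'
      · exact Or.inr (Or.inl (by linarith [sub_eq_zero.mp h']))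
      · exact Or.inr (Or.inr (by linarith))
  have hCkey : ∀ i, (if 0 < hA.eigenvalues i then (hA.eigenvalues i)^2 else 0)
      = (1-C)*(hA.eigenvalues i)^2 + (C*(D+1))*(hA.eigenvalues i) - C*D := by
    intro i
    rcases hroots i with h | h | h
    · rw [h, if_pos hDpos]; ring
    · rw [h, if_pos one_pos]; ring
    · rw [h, if_neg (by push_neg; linarith)]
      rw [hC, hD]
      field_simp
      ring
  rw [Finset.sum_filter, Finset.sum_congr rfl (fun i _ => hCkey i),
    Finset.sum_sub_distrib, Finset.sum_add_distrib, ← Finset.mul_sum, ← Finset.mul_sum,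
    sum_eig p hA, sum_eig_sq p hA, Finset.sum_const, Finset.card_univ,
    Fintype.card_finset_len, Fintype.card_fin, nsmul_eq_mul]
  rw [hd, hN, hC, hD]
  field_simp
  ring

theorem kneser_conjecture (p : ℕ) (hp : 4 ≤ p)
    [DecidableRel (kneserGraph p).Adj]
    (hA : ((kneserGraph p).adjMatrix ℝ).IsHermitian) :
    ((p.choose 2 : ℕ) : ℝ) /
        (((p.choose 2 : ℕ) : ℝ) -
          Real.sqrt (∑ i ∈ univ.filter (fun i => 0 < hA.eigenvalues i),
            (hA.eigenvalues i) ^ 2)) ≤ ((kneserGraph p).cliqueNum : ℝ) := by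
  obtain ⟨-, -, -, hN⟩ := cast_lemmas p hp
  have hx : (4:ℝ) ≤ (p:ℝ) := by exact_mod_cast hp
  set x : ℝ := (p : ℝ) with hxdef
  rw [sPlus_val p hp hA, hN]
  set S : ℝ := Real.sqrt ((x-1)*(x-3)*(x^2-6*x+12)/4) with hS
  have hS0 : 0 ≤ S := Real.sqrt_nonneg _
  have hs : S ≤ x*(x-3)/2 := by
    rw [hS, show x*(x-3)/2 = Real.sqrt ((x*(x-3)/2)^2) from
      (Real.sqrt_sq (by nlinarith)).symm]
    apply Real.sqrt_le_sqrt
    nlinarith [mul_nonneg (by linarith : (0:ℝ) ≤ x-3)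
      (by nlinarith : (0:ℝ) ≤ 4*x^2-18*x+12)]
  have hω : (x-1)/2 ≤ ((kneserGraph p).cliqueNum : ℝ) := by
    have h1 := clique_bound p hp
    have h3 : ((p/2 : ℕ):ℝ) ≤ ((kneserGraph p).cliqueNum : ℝ) := Nat.cast_le.mpr h1
    have h2 : x - 1 ≤ 2*((p/2 : ℕ):ℝ) := by
      have h4 : p ≤ 2*(p/2) + 1 := by omega
      have h5 : (p:ℝ) ≤ 2*((p/2 : ℕ):ℝ) + 1 := by exact_mod_cast h4
      linarith
    linarith
  have hden : x ≤ x*(x-1)/2 - S := by nlinarith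
  rw [div_le_iff₀ (by linarith)]
  nlinarith [mul_nonneg (sub_nonneg.mpr hω) (sub_nonneg.mpr hden),
    mul_nonneg (sub_nonneg.mpr hω) (by linarith : (0:ℝ) ≤ x),
    mul_nonneg (by linarith : (0:ℝ) ≤ (x-1)/2) (sub_nonneg.mpr hden)]
end

section
/- For any graph G with m ≥ 1 edges, 2m/(2m − μ²) ≤ ω(G), where μ is the spectral radius of the adjacency matrix and ω(G) is the clique number (Nikiforov's theorem, conjectured by Edwards and Elphick). -/
open Finset

namespace NikiforovAux

variable {V : Type*} [Fintype V] [DecidableEq V]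

/-- Sum against the signed indicator of `u` minus `v`. -/
lemma sum_d_mul (u v : V) (huv : u ≠ v) (g : V → ℝ) :
    ∑ a, (if a = u then (1 : ℝ) else if a = v then -1 else 0) * g a = g u - g v := by
  have h : ∀ a, (if a = u then (1 : ℝ) else if a = v then -1 else 0) * g a
      = (if a = u then g a else 0) + (if a = v then -(g a) else 0) := by
    intro a
    by_cases h1 : a = u
    · subst h1; simp [huv]
    · by_cases h2 : a = v
      · subst h2; simp [h1, Ne.symm huv]
      · simp [h1, h2]
  simp_rw [h, Finset.sum_add_distrib, Finset.sum_ite_eq' Finset.univ,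
    Finset.mem_univ, if_true]
  ring

/-- Expansion of a quadratic form along a direction whose quadratic contribution vanishes. -/
lemma quad_shift (c : V → V → ℝ) (y d : V → ℝ)
    (hC : ∑ a, ∑ b, c a b * (d a * d b) = 0) (t : ℝ) :
    ∑ a, ∑ b, c a b * (y a + t * d a) * (y b + t * d b)
      = (∑ a, ∑ b, c a b * y a * y b)
        + t * (∑ a, ∑ b, c a b * (y a * d b + d a * y b)) := by
  have h : ∀ a b, c a b * (y a + t * d a) * (y b + t * d b)
      = c a b * y a * y b + t * (c a b * (y a * d b + d a * y b))
        + t ^ 2 * (c a b * (d a * d b)) := by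
    intro a b; ring
  simp_rw [h, Finset.sum_add_distrib, ← Finset.mul_sum, hC]
  ring

/-- The clique case of Motzkin–Straus. -/
lemma ms_clique (G : SimpleGraph V) [DecidableRel G.Adj] (hω : 1 ≤ G.cliqueNum)
    (y : V → ℝ) (hy : ∀ v, 0 ≤ y v)
    (h : ∀ a b, y a ≠ 0 → y b ≠ 0 → a ≠ b → G.Adj a b) :
    (∑ v, y v) ^ 2 / (G.cliqueNum : ℝ)
      ≤ ∑ a, ∑ b, (if G.Adj a b then (0 : ℝ) else 1) * y a * y b := by
  classical
  set S : Finset V := Finset.univ.filter (fun v => y v ≠ 0) with hS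
  have hsum : (∑ v, y v) = ∑ v ∈ S, y v := by
    rw [hS]
    exact (Finset.sum_filter_ne_zero Finset.univ).symm
  have hclique : G.IsClique (S : Set V) := by
    intro a ha b hb hab
    have ha' : y a ≠ 0 := by simpa [hS] using ha
    have hb' : y b ≠ 0 := by simpa [hS] using hb
    exact h a b ha' hb' hab
  have hcard : S.card ≤ G.cliqueNum :=
    SimpleGraph.IsClique.card_le_cliqueNum (tc := hclique)
  have h1 : (∑ v, y v) ^ 2 ≤ (S.card : ℝ) * ∑ v ∈ S, y v ^ 2 := by
    rw [hsum]
    exact sq_sum_le_card_mul_sum_sq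
  have h2 : ∑ v ∈ S, y v ^ 2 ≤ ∑ v, y v ^ 2 :=
    Finset.sum_le_sum_of_subset_of_nonneg (Finset.filter_subset _ _)
      (fun v _ _ => sq_nonneg _)
  have h3 : ∑ v, y v ^ 2 ≤ ∑ a, ∑ b, (if G.Adj a b then (0 : ℝ) else 1) * y a * y b := by
    refine Finset.sum_le_sum fun a _ => ?_
    have hterm : ∀ b ∈ Finset.univ, (0:ℝ) ≤ (if G.Adj a b then (0 : ℝ) else 1) * y a * y b := by
      intro b _
      split_ifs
      · simp
      · simpa using mul_nonneg (hy a) (hy b)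
    have := Finset.single_le_sum hterm (Finset.mem_univ a)
    simpa [G.irrefl, sq] using this
  have hQ0 : (0:ℝ) ≤ ∑ v ∈ S, y v ^ 2 := Finset.sum_nonneg fun v _ => sq_nonneg _
  have hωpos : (0 : ℝ) < (G.cliqueNum : ℝ) := by exact_mod_cast hω
  rw [div_le_iff₀ hωpos]
  calc (∑ v, y v) ^ 2 ≤ (S.card : ℝ) * ∑ v ∈ S, y v ^ 2 := h1
    _ ≤ (G.cliqueNum : ℝ) * ∑ v ∈ S, y v ^ 2 := by
        apply mul_le_mul_of_nonneg_right _ hQ0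
        exact_mod_cast hcard
    _ ≤ (G.cliqueNum : ℝ) * ∑ v, y v ^ 2 := by
        apply mul_le_mul_of_nonneg_left h2 hωpos.le
    _ ≤ (G.cliqueNum : ℝ) * (∑ a, ∑ b, (if G.Adj a b then (0 : ℝ) else 1) * y a * y b) := by
        apply mul_le_mul_of_nonneg_left h3 hωpos.le
    _ = (∑ a, ∑ b, (if G.Adj a b then (0 : ℝ) else 1) * y a * y b) * (G.cliqueNum : ℝ) := by
        ring

/-- Motzkin–Straus inequality, complement form. -/
lemma motzkin_straus (G : SimpleGraph V) [DecidableRel G.Adj] (hω : 1 ≤ G.cliqueNum) :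
    ∀ (n : ℕ) (y : V → ℝ), (∀ v, 0 ≤ y v) →
      (Finset.univ.filter (fun v => y v ≠ 0)).card ≤ n →
      (∑ v, y v) ^ 2 / (G.cliqueNum : ℝ)
        ≤ ∑ a, ∑ b, (if G.Adj a b then (0 : ℝ) else 1) * y a * y b := by
  intro n
  induction n with
  | zero =>
      intro y hy hcard
      apply ms_clique G hω y hy
      intro a b ha hb hab
      exfalso
      have : a ∈ Finset.univ.filter (fun v => y v ≠ 0) := by simp [ha]
      have := Finset.card_pos.mpr ⟨a, this⟩
      omega
  | succ n ih =>
      intro y hy hcard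
      by_cases hpair : ∀ a b, y a ≠ 0 → y b ≠ 0 → a ≠ b → G.Adj a b
      · exact ms_clique G hω y hy hpair
      · push_neg at hpair
        obtain ⟨u, v, hyu, hyv, huv, hnadj⟩ := hpair
        set c : V → V → ℝ := fun a b => if G.Adj a b then (0 : ℝ) else 1 with hc
        set d : V → ℝ := fun a => if a = u then (1 : ℝ) else if a = v then -1 else 0 with hd
        have hdu : d u = 1 := by simp [hd]
        have hdv : d v = -1 := by simp [hd, Ne.symm huv]
        -- the quadratic coefficient vanishes
        have hC : ∑ a, ∑ b, c a b * (d a * d b) = 0 := by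
          have hinner : ∀ a, ∑ b, c a b * (d a * d b) = d a * (c a u - c a v) := by
            intro a
            have : ∑ b, c a b * (d a * d b) = d a * ∑ b, d b * c a b := by
              rw [Finset.mul_sum]
              exact Finset.sum_congr rfl fun b _ => by ring
            rw [this, sum_d_mul u v huv (fun b => c a b)]
          simp_rw [hinner]
          have : ∀ a, d a * (c a u - c a v) = d a * ((fun x => c x u - c x v) a) := fun a => rfl
          simp_rw [this]
          rw [sum_d_mul u v huv (fun x => c x u - c x v)]
          have h1 : c u u = 1 := by simp [hc, G.irrefl]
          have h2 : c v v = 1 := by simp [hc, G.irrefl]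
          have h3 : c u v = 1 := by simp [hc, hnadj]
          have hnadj' : ¬ G.Adj v u := fun h => hnadj h.symm
          have h4 : c v u = 1 := by simp [hc, hnadj']
          rw [h1, h2, h3, h4]; ring
        have hyupos : 0 < y u := lt_of_le_of_ne (hy u) (Ne.symm hyu)
        have hyvpos : 0 < y v := lt_of_le_of_ne (hy v) (Ne.symm hyv)
        have hsumd : ∑ a, d a = 0 := by
          have := sum_d_mul u v huv (fun _ => (1 : ℝ))
          simpa using this
        -- the two shifted vectors
        have key : ∀ t : ℝ, (t = -(y u) ∨ t = y v) →
            (∀ a, 0 ≤ y a + t * d a) ∧ (∑ a, (y a + t * d a)) = ∑ a, y a := by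
          intro t ht
          constructor
          · intro a
            by_cases h1 : a = u
            · subst h1
              rcases ht with ht | ht <;> rw [ht, hdu] <;> nlinarith
            · by_cases h2 : a = v
              · subst h2
                rcases ht with ht | ht <;> rw [ht, hdv] <;> nlinarith
              · have : d a = 0 := by simp [hd, h1, h2]
                rw [this]; simpa using hy a
          · rw [Finset.sum_add_distrib, ← Finset.mul_sum, hsumd, mul_zero, add_zero]
        -- supports shrink
        have hsupp : ∀ (t : ℝ) (w : V), (w = u ∧ t = -(y u)) ∨ (w = v ∧ t = y v) →
            (Finset.univ.filter (fun a => y a + t * d a ≠ 0)).card ≤ n := by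
          intro t w hw
          have hwmem : w ∈ Finset.univ.filter (fun a => y a ≠ 0) := by
            rcases hw with ⟨hw, _⟩ | ⟨hw, _⟩ <;> subst hw <;> simp [hyu, hyv]
          have hsub : Finset.univ.filter (fun a => y a + t * d a ≠ 0)
              ⊆ (Finset.univ.filter (fun a => y a ≠ 0)).erase w := by
            intro a ha
            rw [Finset.mem_filter] at ha
            have ha' := ha.2
            rw [Finset.mem_erase, Finset.mem_filter]
            have hwzero : y w + t * d w = 0 := by
              rcases hw with ⟨hw, ht⟩ | ⟨hw, ht⟩ <;> subst hw <;> subst ht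
              · rw [hdu]; ring
              · rw [hdv]; ring
            have haw : a ≠ w := by
              intro h; subst h; exact ha' hwzero
            refine ⟨haw, Finset.mem_univ a, ?_⟩
            by_cases h1 : a = u
            · subst h1
              rcases hw with ⟨hw, ht⟩ | ⟨hw, ht⟩
              · exact absurd hw.symm haw
              · exact hyu
            · by_cases h2 : a = v
              · subst h2
                rcases hw with ⟨hw, ht⟩ | ⟨hw, ht⟩
                · exact hyv
                · exact absurd hw.symm haw
              · have : d a = 0 := by simp [hd, h1, h2]
                rw [this, mul_zero, add_zero] at ha'
                exact ha'
          have := Finset.card_le_card hsub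
          rw [Finset.card_erase_of_mem hwmem] at this
          omega
        -- the two Q-values interpolate Q y linearly
        have hQ1 := quad_shift c y d hC (-(y u))
        have hQ2 := quad_shift c y d hC (y v)
        set Qy := ∑ a, ∑ b, c a b * y a * y b with hQy
        set B := ∑ a, ∑ b, c a b * (y a * d b + d a * y b) with hB
        by_cases hle : ∑ a, ∑ b, c a b * (y a + -(y u) * d a) * (y b + -(y u) * d b) ≤ Qy
        · have h1 := ih (fun a => y a + -(y u) * d a) (key _ (Or.inl rfl)).1
            (hsupp _ u (Or.inl ⟨rfl, rfl⟩))
          calc (∑ a, y a) ^ 2 / (G.cliqueNum : ℝ)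
              = (∑ a, (y a + -(y u) * d a)) ^ 2 / (G.cliqueNum : ℝ) := by
                rw [(key _ (Or.inl rfl)).2]
            _ ≤ ∑ a, ∑ b, c a b * (y a + -(y u) * d a) * (y b + -(y u) * d b) := h1
            _ ≤ Qy := hle
        · have hBneg : B < 0 := by
            rw [hQ1] at hle
            push_neg at hle
            nlinarith
          have hle2 : ∑ a, ∑ b, c a b * (y a + y v * d a) * (y b + y v * d b) ≤ Qy := by
            rw [hQ2]
            nlinarith
          have h1 := ih (fun a => y a + y v * d a) (key _ (Or.inr rfl)).1
            (hsupp _ v (Or.inr ⟨rfl, rfl⟩))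
          calc (∑ a, y a) ^ 2 / (G.cliqueNum : ℝ)
              = (∑ a, (y a + y v * d a)) ^ 2 / (G.cliqueNum : ℝ) := by
                rw [(key _ (Or.inr rfl)).2]
            _ ≤ ∑ a, ∑ b, c a b * (y a + y v * d a) * (y b + y v * d b) := h1
            _ ≤ Qy := hle2

end NikiforovAux

theorem nikiforov_bound
    {V : Type*} [Fintype V] [DecidableEq V] (G : SimpleGraph V)
    [DecidableRel G.Adj]
    (hA : (G.adjMatrix ℝ).IsHermitian)
    (hm : 1 ≤ G.edgeFinset.card)
    (μ : ℝ) (hub : ∀ i, hA.eigenvalues i ≤ μ) (hmem : ∃ i, hA.eigenvalues i = μ) :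
    2 * (G.edgeFinset.card : ℝ) / (2 * (G.edgeFinset.card : ℝ) - μ ^ 2) ≤
      (G.cliqueNum : ℝ) := by
  classical
  obtain ⟨i, hi⟩ := hmem
  -- clique number is at least 2
  have hedge : G.edgeFinset.Nonempty := Finset.card_pos.mp hm
  obtain ⟨e, he⟩ := hedge
  have hω2 : 2 ≤ G.cliqueNum := by
    revert he
    refine Sym2.ind (fun a b he => ?_) e
    rw [SimpleGraph.mem_edgeFinset, SimpleGraph.mem_edgeSet] at he
    have hne : a ≠ b := he.ne
    have hclique : G.IsClique (({a, b} : Finset V) : Set V) := by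
      rw [Finset.coe_insert, Finset.coe_singleton, SimpleGraph.isClique_pair]
      exact fun _ => he
    have hcard := SimpleGraph.IsClique.card_le_cliqueNum (tc := hclique)
    rwa [Finset.card_pair hne] at hcard
  have hω : 1 ≤ G.cliqueNum := le_trans (by norm_num) hω2
  -- the eigenvector
  have heig := hA.mulVec_eigenvectorBasis i
  rw [hi] at heig
  set f : V → ℝ := ⇑(hA.eigenvectorBasis i) with hf
  have hnorm : ∑ v, f v ^ 2 = 1 := by
    have h := hA.eigenvectorBasis.orthonormal.1 i
    rw [EuclideanSpace.norm_eq] at h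
    have h2 := congrArg (fun x : ℝ => x ^ 2) h
    simp only [Real.sq_sqrt (Finset.sum_nonneg fun v _ => sq_nonneg _), one_pow] at h2
    simpa [hf, Real.norm_eq_abs, sq_abs] using h2
  have hmuS : μ = ∑ a, ∑ b, (if G.Adj a b then (1:ℝ) else 0) * (f a * f b) := by
    have h1 : ∑ v, f v * ((G.adjMatrix ℝ).mulVec f) v = μ := by
      rw [heig]
      have h2 : ∀ v : V, f v * (μ • f) v = μ * f v ^ 2 := by
        intro v
        simp only [Pi.smul_apply, smul_eq_mul]
        ring
      rw [Finset.sum_congr rfl fun v _ => h2 v, ← Finset.mul_sum, hnorm, mul_one]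
    rw [← h1]
    simp only [Matrix.mulVec, dotProduct, SimpleGraph.adjMatrix_apply, Finset.mul_sum]
    exact Finset.sum_congr rfl fun a _ => Finset.sum_congr rfl fun b _ => by ring
  -- apply Motzkin-Straus to y = f^2
  have hMS := NikiforovAux.motzkin_straus G hω
    (Finset.univ.filter (fun v => (fun v => f v ^ 2) v ≠ 0)).card
    (fun v => f v ^ 2) (fun v => sq_nonneg _) le_rfl
  have hysum : ∑ v, f v ^ 2 = 1 := hnorm
  rw [hysum, one_pow] at hMS
  -- hMS : 1 / ω ≤ Q
  set Q : ℝ := ∑ a, ∑ b, (if G.Adj a b then (0:ℝ) else 1) * f a ^ 2 * f b ^ 2 with hQdef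
  have hMS' : 1 / (G.cliqueNum : ℝ) ≤ Q := hMS
  -- pair finset
  set P : Finset (V × V) := Finset.univ.filter (fun p : V × V => G.Adj p.1 p.2) with hP
  have hPcard : (P.card : ℝ) = 2 * (G.edgeFinset.card : ℝ) := by
    have h1 : P.card = ∑ a : V, ∑ b : V, if G.Adj a b then 1 else 0 := by
      rw [hP, Finset.card_filter, ← Finset.univ_product_univ, Finset.sum_product]
    have h2 : ∀ a : V, (∑ b : V, if G.Adj a b then 1 else 0) = G.degree a := by
      intro a
      have hnb : G.neighborFinset a = Finset.univ.filter (fun b => G.Adj a b) := by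
        ext b
        simp [SimpleGraph.mem_neighborFinset]
      rw [← SimpleGraph.card_neighborFinset_eq_degree, hnb, Finset.card_filter]
    have h3 : P.card = 2 * G.edgeFinset.card := by
      rw [h1, Finset.sum_congr rfl fun a _ => h2 a,
        SimpleGraph.sum_degrees_eq_twice_card_edges]
    rw [h3]
    push_cast
    ring
  -- μ as a sum over P
  have hSP : ∑ a, ∑ b, (if G.Adj a b then (1:ℝ) else 0) * (f a * f b)
      = ∑ p ∈ P, f p.1 * f p.2 := by
    rw [hP, Finset.sum_filter, ← Finset.univ_product_univ, Finset.sum_product]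
    exact Finset.sum_congr rfl fun a _ => Finset.sum_congr rfl fun b _ => by
      split_ifs <;> ring
  -- the adjacency square-sum
  have hS2 : ∑ p ∈ P, (f p.1 * f p.2) ^ 2
      = ∑ a, ∑ b, (if G.Adj a b then (1:ℝ) else 0) * (f a ^ 2 * f b ^ 2) := by
    rw [hP, Finset.sum_filter, ← Finset.univ_product_univ, Finset.sum_product]
    exact Finset.sum_congr rfl fun a _ => Finset.sum_congr rfl fun b _ => by
      split_ifs <;> ring
  have hsplit : (∑ a, ∑ b, (if G.Adj a b then (1:ℝ) else 0) * (f a ^ 2 * f b ^ 2)) + Q = 1 := by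
    rw [hQdef, ← Finset.sum_add_distrib]
    have h1 : ∀ a : V, (∑ b, (if G.Adj a b then (1:ℝ) else 0) * (f a ^ 2 * f b ^ 2))
        + (∑ b, (if G.Adj a b then (0:ℝ) else 1) * f a ^ 2 * f b ^ 2)
        = ∑ b, f a ^ 2 * f b ^ 2 := by
      intro a
      rw [← Finset.sum_add_distrib]
      exact Finset.sum_congr rfl fun b _ => by split_ifs <;> ring
    rw [Finset.sum_congr rfl fun a _ => h1 a]
    have h2 : ∀ a : V, ∑ b, f a ^ 2 * f b ^ 2 = f a ^ 2 := by
      intro a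
      rw [← Finset.mul_sum, hnorm, mul_one]
    rw [Finset.sum_congr rfl fun a _ => h2 a, hnorm]
  -- Cauchy-Schwarz
  have habs : |∑ p ∈ P, f p.1 * f p.2| ≤ ∑ p ∈ P, |f p.1 * f p.2| :=
    Finset.abs_sum_le_sum_abs _ _
  have hCS : (∑ p ∈ P, |f p.1 * f p.2|) ^ 2 ≤ (P.card : ℝ) * ∑ p ∈ P, (f p.1 * f p.2) ^ 2 := by
    have h := Finset.sum_mul_sq_le_sq_mul_sq P (fun _ => (1:ℝ)) (fun p => |f p.1 * f p.2|)
    simpa [sq_abs, mul_pow] using h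
  -- combine into the spectral bound
  have hT0 : (0:ℝ) ≤ ∑ p ∈ P, |f p.1 * f p.2| := Finset.sum_nonneg fun p _ => abs_nonneg _
  have hmu2 : μ ^ 2 ≤ (P.card : ℝ) * ∑ p ∈ P, (f p.1 * f p.2) ^ 2 := by
    have h1 : μ ^ 2 ≤ (∑ p ∈ P, |f p.1 * f p.2|) ^ 2 := by
      rw [hmuS, hSP]
      have := abs_le.mp habs
      exact sq_le_sq' this.1 this.2
    exact le_trans h1 hCS
  have hQ1 : ∑ p ∈ P, (f p.1 * f p.2) ^ 2 ≤ 1 - 1 / (G.cliqueNum : ℝ) := by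
    rw [hS2]
    linarith [hsplit, hMS']
  have hfinal : μ ^ 2 ≤ 2 * (G.edgeFinset.card : ℝ) * (1 - 1 / (G.cliqueNum : ℝ)) := by
    calc μ ^ 2 ≤ (P.card : ℝ) * ∑ p ∈ P, (f p.1 * f p.2) ^ 2 := hmu2
      _ ≤ (P.card : ℝ) * (1 - 1 / (G.cliqueNum : ℝ)) := by
          apply mul_le_mul_of_nonneg_left hQ1 (by positivity)
      _ = 2 * (G.edgeFinset.card : ℝ) * (1 - 1 / (G.cliqueNum : ℝ)) := by rw [hPcard]
  -- final arithmetic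
  set w : ℝ := (G.cliqueNum : ℝ) with hw
  set M : ℝ := 2 * (G.edgeFinset.card : ℝ) with hM
  have hwpos : (0:ℝ) < w := by
    rw [hw]
    exact_mod_cast lt_of_lt_of_le (by norm_num) hω
  have hMpos : (2:ℝ) ≤ M := by
    rw [hM]
    have : (1:ℝ) ≤ (G.edgeFinset.card : ℝ) := by exact_mod_cast hm
    linarith
  have h1 : M / w ≤ M - μ ^ 2 := by
    have : M * (1 - 1 / w) = M - M / w := by ring
    rw [this] at hfinal
    linarith
  have hden : (0:ℝ) < M - μ ^ 2 := by
    have : (0:ℝ) < M / w := div_pos (by linarith) hwpos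
    linarith
  rw [div_le_iff₀ hden]
  calc M = w * (M / w) := by field_simp
    _ ≤ w * (M - μ ^ 2) := mul_le_mul_of_nonneg_left h1 hwpos.le
end

section
/- For any graph G, the spectral radius satisfies μ² ≤ 2m(ω − 1)/ω, where m is the number of edges and ω the clique number. -/
open Finset Matrix

/-- Motzkin–Straus upper bound for the adjacency quadratic form on the simplex. -/
lemma motzkin_straus {V : Type*} [Fintype V] [DecidableEq V]
    (G : SimpleGraph V) [DecidableRel G.Adj] :
    ∀ n (y : V → ℝ), (Finset.univ.filter fun p => y p ≠ 0).card ≤ n →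
      (∀ p, 0 ≤ y p) → (∑ p, y p) = 1 →
      y ⬝ᵥ ((G.adjMatrix ℝ) *ᵥ y) ≤ 1 - 1 / (G.cliqueNum : ℝ) := by
  intro n
  induction n with
  | zero =>
    intro y hcard _ hsum
    exfalso
    have hy : ∀ p, y p = 0 := by
      intro p
      by_contra hp
      have : p ∈ Finset.univ.filter fun p => y p ≠ 0 := by simp [hp]
      have := Finset.card_pos.mpr ⟨p, this⟩
      omega
    simp [hy] at hsum
  | succ n ih =>
    intro y hcard h0 hsum
    set s := Finset.univ.filter fun p => y p ≠ 0 with hs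
    by_cases hc : ∀ p ∈ s, ∀ q ∈ s, p ≠ q → G.Adj p q
    · -- clique case
      have hmem : ∀ p, p ∉ s → y p = 0 := by
        intro p hp
        by_contra h
        exact hp (by simp [hs, h])
      have hone : ∑ p ∈ s, y p = 1 := by
        rw [← hsum]
        exact Finset.sum_subset (Finset.subset_univ s) (fun x _ hx => hmem x hx)
      have h1 : y ⬝ᵥ ((G.adjMatrix ℝ) *ᵥ y)
          = ∑ p ∈ s, ∑ q ∈ s, y p * ((G.adjMatrix ℝ) p q * y q) := by
        rw [dotProduct]
        rw [← Finset.sum_subset (Finset.subset_univ s)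
          (fun x _ hx => by simp [hmem x hx])]
        refine Finset.sum_congr rfl fun p _ => ?_
        rw [mulVec, dotProduct, Finset.mul_sum]
        rw [← Finset.sum_subset (Finset.subset_univ s)
          (fun x _ hx => by simp [hmem x hx])]
      have h2 : ∀ p ∈ s, ∑ q ∈ s, y p * ((G.adjMatrix ℝ) p q * y q)
          = (∑ q ∈ s, y p * y q) - y p * y p := by
        intro p hp
        have hterm : ∀ q ∈ s, y p * ((G.adjMatrix ℝ) p q * y q)
            = y p * y q - (if q = p then y p * y q else 0) := by
          intro q hq
          by_cases h : q = p
          · subst h; simp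
          · have hadj := hc p hp q hq (Ne.symm h)
            simp [h, hadj]
        rw [Finset.sum_congr rfl hterm, Finset.sum_sub_distrib, Finset.sum_ite_eq' s p _]
        simp [hp]
      have h3 : y ⬝ᵥ ((G.adjMatrix ℝ) *ᵥ y) = 1 - ∑ p ∈ s, y p ^ 2 := by
        rw [h1, Finset.sum_congr rfl h2, Finset.sum_sub_distrib, ← Finset.sum_mul_sum,
          hone]
        simp [sq]
      have hsne : s.Nonempty := by
        by_contra h
        rw [Finset.not_nonempty_iff_eq_empty] at h
        simp [h] at hone
      have hspos : 0 < s.card := Finset.card_pos.mpr hsne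
      have hclique : G.IsClique ↑s := fun p hp q hq hpq =>
        hc p (by simpa using hp) q (by simpa using hq) hpq
      have hcard2 : s.card ≤ G.cliqueNum :=
        SimpleGraph.IsClique.card_le_cliqueNum (tc := hclique)
      have hCS : (1:ℝ) ≤ (s.card : ℝ) * ∑ p ∈ s, y p ^ 2 := by
        have := sq_sum_le_card_mul_sum_sq (s := s) (f := y)
        rwa [hone, one_pow] at this
      have hinv : 1 / (s.card : ℝ) ≤ ∑ p ∈ s, y p ^ 2 := by
        rw [div_le_iff₀ (by positivity)]
        linarith [hCS]
      have hinv2 : 1 / (G.cliqueNum : ℝ) ≤ 1 / (s.card : ℝ) := by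
        apply one_div_le_one_div_of_le (by positivity)
        exact_mod_cast hcard2
      rw [h3]
      linarith
    · -- shift case
      push_neg at hc
      obtain ⟨i0, hi0, j0, hj0, hne0, hnadj0⟩ := hc
      have key : ∀ i j, i ∈ s → j ∈ s → i ≠ j → ¬ G.Adj i j →
          ((G.adjMatrix ℝ) *ᵥ y) j ≤ ((G.adjMatrix ℝ) *ᵥ y) i →
          y ⬝ᵥ ((G.adjMatrix ℝ) *ᵥ y) ≤ 1 - 1 / (G.cliqueNum : ℝ) := by
        intro i j hi hj hne hnadj hle
        set A := G.adjMatrix ℝ with hA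
        have hsymm : ∀ p q, A p q = A q p := fun p q => by
          simp [hA, SimpleGraph.adjMatrix_apply, G.adj_comm]
        set d : V → ℝ := y j • ((Pi.single i 1 : V → ℝ) - Pi.single j 1) with hd
        set y' : V → ℝ := y + d with hy'
        have hdi : d i = y j := by simp [hd, Pi.single_apply, hne.symm]
        have hdj : d j = - y j := by simp [hd, Pi.single_apply, hne]
        have hdp : ∀ p, p ≠ i → p ≠ j → d p = 0 := by
          intro p hpi hpj
          simp [hd, Pi.single_apply, Ne.symm hpi, Ne.symm hpj]
        have hy'j : y' j = 0 := by simp [hy', hdj]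
        have hy'i : y' i = y i + y j := by simp [hy', hdi]
        have hy'p : ∀ p, p ≠ i → p ≠ j → y' p = y p := by
          intro p hpi hpj; simp [hy', hdp p hpi hpj]
        have h0' : ∀ p, 0 ≤ y' p := by
          intro p
          by_cases hpi : p = i
          · subst hpi; rw [hy'i]; exact add_nonneg (h0 _) (h0 _)
          · by_cases hpj : p = j
            · subst hpj; rw [hy'j]
            · rw [hy'p p hpi hpj]; exact h0 p
        have hsumd : ∑ p, d p = 0 := by
          simp only [hd, Pi.smul_apply, Pi.sub_apply, smul_eq_mul, ← Finset.mul_sum,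
            Finset.sum_sub_distrib, Pi.single_apply]
          simp
        have hsum' : ∑ p, y' p = 1 := by
          simp only [hy', Pi.add_apply, Finset.sum_add_distrib, hsum, hsumd, add_zero]
        have hsupp : (Finset.univ.filter fun p => y' p ≠ 0) ⊆ s.erase j := by
          intro p hp
          simp only [Finset.mem_filter, Finset.mem_univ, true_and] at hp
          rw [Finset.mem_erase]
          constructor
          · rintro rfl; exact hp hy'j
          · by_cases hpi : p = i
            · subst hpi; exact hi
            · by_cases hpj : p = j
              · exact absurd (hpj ▸ hy'j) hp
              · rw [hs, Finset.mem_filter]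
                exact ⟨Finset.mem_univ _, by rwa [← hy'p p hpi hpj]⟩
        have hcard' : (Finset.univ.filter fun p => y' p ≠ 0).card ≤ n := by
          have h1 := Finset.card_le_card hsupp
          rw [Finset.card_erase_of_mem hj] at h1
          have h2 : 0 < s.card := Finset.card_pos.mpr ⟨j, hj⟩
          omega
        have hAd : A *ᵥ d = y j • fun p => A p i - A p j := by
          rw [hd, Matrix.mulVec_smul, Matrix.mulVec_sub, Matrix.mulVec_single,
            Matrix.mulVec_single]
          simp [funext_iff]
        have h_yAd : y ⬝ᵥ (A *ᵥ d) = y j * ((A *ᵥ y) i - (A *ᵥ y) j) := by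
          rw [hAd, dotProduct_smul]
          simp only [smul_eq_mul]
          congr 1
          simp only [dotProduct, mulVec, mul_sub, Finset.sum_sub_distrib]
          congr 1 <;> exact Finset.sum_congr rfl fun p _ => by rw [hsymm]; ring
        have h_dAy : d ⬝ᵥ (A *ᵥ y) = y j * ((A *ᵥ y) i - (A *ᵥ y) j) := by
          rw [hd, smul_dotProduct, sub_dotProduct, single_dotProduct, single_dotProduct]
          simp
        have h_dAd : d ⬝ᵥ (A *ᵥ d) = 0 := by
          rw [hAd, hd, smul_dotProduct, dotProduct_smul, sub_dotProduct,
            single_dotProduct, single_dotProduct]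
          have h1 : A i i = 0 := by simp [hA]
          have h2 : A j j = 0 := by simp [hA]
          have h3 : A i j = 0 := by simp [hA, hnadj]
          have h4 : A j i = 0 := by rw [hsymm]; exact h3
          simp [h1, h2, h3, h4]
        have hQ : y' ⬝ᵥ (A *ᵥ y') = y ⬝ᵥ (A *ᵥ y)
            + 2 * (y j * ((A *ᵥ y) i - (A *ᵥ y) j)) := by
          rw [hy', Matrix.mulVec_add, dotProduct_add, add_dotProduct, add_dotProduct,
            h_yAd, h_dAy, h_dAd]
          ring
        have hmono : y ⬝ᵥ (A *ᵥ y) ≤ y' ⬝ᵥ (A *ᵥ y') := by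
          rw [hQ]
          have := mul_nonneg (h0 j) (sub_nonneg.mpr hle)
          linarith
        exact hmono.trans (ih y' hcard' h0' hsum')
      rcases le_total (((G.adjMatrix ℝ) *ᵥ y) j0) (((G.adjMatrix ℝ) *ᵥ y) i0) with h | h
      · exact key i0 j0 hi0 hj0 hne0 hnadj0 h
      · exact key j0 i0 hj0 hi0 hne0.symm (fun h' => hnadj0 h'.symm) h

theorem spectral_radius_sq_le
    {V : Type*} [Fintype V] [DecidableEq V] [Nonempty V] (G : SimpleGraph V)
    [DecidableRel G.Adj]
    (hA : (G.adjMatrix ℝ).IsHermitian)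
    (μ : ℝ) (hub : ∀ i, hA.eigenvalues i ≤ μ) (hmem : ∃ i, hA.eigenvalues i = μ) :
    μ ^ 2 ≤ 2 * (G.edgeFinset.card : ℝ) * ((G.cliqueNum : ℝ) - 1) / (G.cliqueNum : ℝ) := by
  classical
  obtain ⟨i0, hi0⟩ := hmem
  set v : V → ℝ := ⇑(hA.eigenvectorBasis i0) with hv
  have hAv : (G.adjMatrix ℝ) *ᵥ v = μ • v := by
    rw [hv, hA.mulVec_eigenvectorBasis, hi0]
  have hnorm1 : ‖hA.eigenvectorBasis i0‖ = 1 := hA.eigenvectorBasis.orthonormal.1 i0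
  have hvsq : ∑ p, v p ^ 2 = 1 := by
    rw [EuclideanSpace.norm_eq] at hnorm1
    have h2 := congrArg (· ^ 2) hnorm1
    simp only [one_pow] at h2
    rw [Real.sq_sqrt (by positivity)] at h2
    simpa [Real.norm_eq_abs, sq_abs] using h2
  have hmu : μ = v ⬝ᵥ ((G.adjMatrix ℝ) *ᵥ v) := by
    rw [hAv, dotProduct_smul, smul_eq_mul]
    have hvv : v ⬝ᵥ v = 1 := by rw [dotProduct]; simpa [sq] using hvsq
    rw [hvv, mul_one]
  set y : V → ℝ := fun p => v p ^ 2 with hy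
  have h0 : ∀ p, 0 ≤ y p := fun p => sq_nonneg _
  have hsum : ∑ p, y p = 1 := hvsq
  have hMS : y ⬝ᵥ ((G.adjMatrix ℝ) *ᵥ y) ≤ 1 - 1 / (G.cliqueNum : ℝ) :=
    motzkin_straus G _ y le_rfl h0 hsum
  set T : Finset (V × V) := Finset.univ.filter (fun pq => G.Adj pq.1 pq.2) with hT
  have hdouble : ∀ w : V → ℝ,
      w ⬝ᵥ ((G.adjMatrix ℝ) *ᵥ w) = ∑ pq ∈ T, w pq.1 * w pq.2 := by
    intro w
    rw [hT, Finset.sum_filter, ← Finset.univ_product_univ, Finset.sum_product]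
    rw [dotProduct]
    refine Finset.sum_congr rfl fun p _ => ?_
    rw [mulVec, dotProduct, Finset.mul_sum]
    refine Finset.sum_congr rfl fun q _ => ?_
    by_cases h : G.Adj p q <;> simp [h, mul_comm]
  have hmuT : μ = ∑ pq ∈ T, v pq.1 * v pq.2 := by rw [hmu, hdouble]
  have hQT : ∑ pq ∈ T, (v pq.1 * v pq.2) ^ 2 = y ⬝ᵥ ((G.adjMatrix ℝ) *ᵥ y) := by
    rw [hdouble y]
    exact Finset.sum_congr rfl fun pq _ => by rw [hy]; ring
  have hCS : μ ^ 2 ≤ (T.card : ℝ) * (y ⬝ᵥ ((G.adjMatrix ℝ) *ᵥ y)) := by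
    rw [hmuT, ← hQT]
    exact_mod_cast sq_sum_le_card_mul_sum_sq (s := T) (f := fun pq => v pq.1 * v pq.2)
  have hTcard : T.card = 2 * G.edgeFinset.card := by
    rw [← SimpleGraph.sum_degrees_eq_twice_card_edges]
    rw [hT, Finset.card_filter, ← Finset.univ_product_univ, Finset.sum_product]
    refine Finset.sum_congr rfl fun p _ => ?_
    rw [← Finset.card_filter]
    rw [SimpleGraph.degree]
    congr 1
    ext q
    simp
  have hω : 1 ≤ G.cliqueNum := by
    obtain ⟨p⟩ := ‹Nonempty V›
    have hcl : G.IsClique (↑({p} : Finset V)) := by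
      simp [SimpleGraph.isClique_singleton]
    simpa using SimpleGraph.IsClique.card_le_cliqueNum (tc := hcl)
  have hω' : (1:ℝ) ≤ (G.cliqueNum : ℝ) := by exact_mod_cast hω
  have hbound : μ ^ 2 ≤ (T.card : ℝ) * (1 - 1 / (G.cliqueNum : ℝ)) :=
    hCS.trans (mul_le_mul_of_nonneg_left hMS (Nat.cast_nonneg _))
  have hTc : (T.card : ℝ) = 2 * (G.edgeFinset.card : ℝ) := by
    rw [hTcard]; push_cast; ring
  rw [hTc] at hbound
  have heq : 2 * (G.edgeFinset.card : ℝ) * (1 - 1 / (G.cliqueNum : ℝ))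
      = 2 * (G.edgeFinset.card : ℝ) * ((G.cliqueNum : ℝ) - 1) / (G.cliqueNum : ℝ) := by
    have hne : (G.cliqueNum : ℝ) ≠ 0 := by linarith
    rw [mul_div_assoc, sub_div, div_self hne]
  linarith [heq ▸ hbound]
end

section
/- For any graph G on n vertices with average degree d = 2m/n, n/(n − d) ≤ ω(G) (concise Turán theorem). -/
open Finset SimpleGraph

theorem turan_concise
    {V : Type*} [Fintype V] [DecidableEq V] [Nonempty V] (G : SimpleGraph V)
    [DecidableRel G.Adj] :
    (Fintype.card V : ℝ) /
        ((Fintype.card V : ℝ) -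
          2 * (G.edgeFinset.card : ℝ) / (Fintype.card V : ℝ)) ≤
      (G.cliqueNum : ℝ) := by
  set n := Fintype.card V with hn
  set r := G.cliqueNum with hrdef
  have hn0 : 0 < n := Fintype.card_pos
  -- r ≥ 1
  have hr : 0 < r := by
    obtain ⟨v⟩ := (inferInstance : Nonempty V)
    have hc : G.IsClique ({v} : Finset V) := by simp
    have := hc.card_le_cliqueNum
    have h1 : 1 ≤ G.cliqueNum := by simpa using this
    exact h1
  -- G is (r+1)-clique-free
  have hGfree : G.CliqueFree (r + 1) := by
    intro s hs
    have h1 : #s ≤ r := hs.isClique.card_le_cliqueNum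
    rw [hs.card_eq] at h1
    omega
  obtain ⟨H, hDec, hH⟩ := exists_isTuranMaximal (V := V) hr
  have hm : #G.edgeFinset ≤ #H.edgeFinset := hH.2 hGfree
  set fp := hH.finpartition with hfp
  -- sum over vertices of part sizes
  have hsum : ∑ P ∈ fp.parts, #P * #P = ∑ v : V, #(fp.part v) := by
    calc ∑ P ∈ fp.parts, #P * #P
        = ∑ P ∈ fp.parts, ∑ v ∈ P, #(fp.part v) := by
          refine Finset.sum_congr rfl fun P hP => ?_
          rw [Finset.sum_congr rfl fun v hv => by rw [fp.part_eq_of_mem hP hv]]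
          simp [mul_comm]
      _ = ∑ v ∈ fp.parts.biUnion id, #(fp.part v) :=
          (sum_biUnion fp.supIndep.pairwiseDisjoint).symm
      _ = ∑ v : V, #(fp.part v) := by rw [fp.biUnion_parts]
  -- degree sum identity in ℕ
  have hkey : 2 * #H.edgeFinset + ∑ P ∈ fp.parts, #P * #P = n * n := by
    rw [hsum, ← H.sum_degrees_eq_twice_card_edges, ← Finset.sum_add_distrib]
    have : ∀ v : V, H.degree v + #(fp.part v) = n := by
      intro v
      have hdeg : H.degree v = n - #(fp.part v) :=
        hH.degree_eq_card_sub_part_card (s := v)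
      have hle : #(fp.part v) ≤ n := by
        simpa using card_le_card (fp.part v).subset_univ
      omega
    simp [this, Finset.sum_const, hn]
  -- Cauchy-Schwarz over the parts, in ℝ
  have hS : (n : ℝ) * n ≤ (r : ℝ) * ∑ P ∈ fp.parts, (#P : ℝ) * #P := by
    have hC : ((∑ P ∈ fp.parts, (#P : ℝ)) ^ 2 : ℝ) ≤
        #fp.parts * ∑ P ∈ fp.parts, (#P : ℝ) ^ 2 :=
      sq_sum_le_card_mul_sum_sq
    have hpn : ∑ P ∈ fp.parts, (#P : ℝ) = n := by
      rw [← Nat.cast_sum]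
      norm_cast
      exact fp.sum_card_parts
    have hpl : (#fp.parts : ℝ) ≤ r := by exact_mod_cast hH.card_parts_le
    calc (n : ℝ) * n = (∑ P ∈ fp.parts, (#P : ℝ)) ^ 2 := by rw [hpn]; ring
      _ ≤ #fp.parts * ∑ P ∈ fp.parts, (#P : ℝ) ^ 2 := hC
      _ ≤ (r : ℝ) * ∑ P ∈ fp.parts, (#P : ℝ) * #P := by
          simp_rw [sq]
          apply mul_le_mul_of_nonneg_right hpl
          exact sum_nonneg fun P _ => mul_self_nonneg _
  -- combine: 2mH ≤ n² - n²/r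
  have hkeyR : 2 * (#H.edgeFinset : ℝ) + ∑ P ∈ fp.parts, (#P : ℝ) * #P = n * n := by
    exact_mod_cast congrArg (Nat.cast : ℕ → ℝ) hkey
  have hr0 : (0 : ℝ) < r := by exact_mod_cast hr
  have hn0R : (0 : ℝ) < n := by exact_mod_cast hn0
  have hmH : 2 * (#H.edgeFinset : ℝ) ≤ n * n - n * n / r := by
    have : (n : ℝ) * n / r ≤ ∑ P ∈ fp.parts, (#P : ℝ) * #P := by
      rw [div_le_iff₀ hr0]
      linarith [hS]
    linarith
  have hmR : 2 * (#G.edgeFinset : ℝ) ≤ n * n - n * n / r := by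
    have : (#G.edgeFinset : ℝ) ≤ #H.edgeFinset := by exact_mod_cast hm
    linarith
  -- denominator bound: n - 2m/n ≥ n/r > 0
  have hden : (n : ℝ) / r ≤ (n : ℝ) - 2 * #G.edgeFinset / n := by
    have h2 : 2 * (#G.edgeFinset : ℝ) / n ≤ (n : ℝ) - n / r := by
      rw [div_le_iff₀ hn0R, sub_mul]
      calc 2 * (#G.edgeFinset : ℝ) ≤ n * n - n * n / r := hmR
        _ = n * n - n / r * n := by ring
    linarith
  have hdpos : (0 : ℝ) < (n : ℝ) / r := div_pos hn0R hr0
  calc (n : ℝ) / ((n : ℝ) - 2 * #G.edgeFinset / n)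
      ≤ (n : ℝ) / ((n : ℝ) / r) := by
        apply div_le_div_of_nonneg_left hn0R.le hdpos hden
    _ = r := by field_simp
end
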